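/- arXiv:2104.07024 — 7 statements merged into one kernel-verified Lean document; each statement's English description precedes it below -/
import Mathlib

section
/- Let n be a natural number, let x₀ be a real number, and let v : ℝ → ℝ be n times differentiable in a neighborhood of x₀ with v nonvanishing in a neighborhood of x₀. Then the n-th derivative of x ↦ 1/v(x) at x₀ equals n! · Σ_{y} [ ( (Σᵢ yᵢ)! / (y₁! ⋯ yₙ!) ) · (−1)^{Σᵢ yᵢ} / v(x₀)^{(Σᵢ yᵢ)+1} · Πᵢ₌₁ⁿ ( v⁽ⁱ⁾(x₀)/i! )^{yᵢ} ], where the sum runs over all tuples y = (y₁, …, yₙ) of nonnegative integers satisfying Σᵢ₌₁ⁿ i·yᵢ = n, and v⁽ⁱ⁾ denotes the i-th derivative of v. -/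
open Finset Filter

namespace ReciprocalRuleAux

/-- The index set: partitions of `m` encoded by multiplicities. -/
noncomputable def S (m : ℕ) : Finset (Fin m → ℕ) :=
  (Fintype.piFinset fun _ : Fin m => Finset.range (m + 1)).filter
    (fun y => ∑ i : Fin m, ((i : ℕ) + 1) * y i = m)

lemma mem_S {m : ℕ} {y : Fin m → ℕ} : y ∈ S m ↔ ∑ i : Fin m, ((i : ℕ) + 1) * y i = m := by
  constructor
  · intro h; exact (Finset.mem_filter.1 h).2
  · intro h
    refine Finset.mem_filter.2 ⟨Fintype.mem_piFinset.2 fun i => ?_, h⟩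
    rw [Finset.mem_range, Nat.lt_succ_iff]
    calc y i ≤ ((i : ℕ) + 1) * y i := Nat.le_mul_of_pos_left _ (Nat.succ_pos _)
    _ ≤ ∑ i : Fin m, ((i : ℕ) + 1) * y i := Finset.single_le_sum
        (f := fun i : Fin m => ((i : ℕ) + 1) * y i) (fun _ _ => Nat.zero_le _) (Finset.mem_univ i)
    _ = m := h

noncomputable def C {m : ℕ} (y : Fin m → ℕ) : ℝ :=
  (Nat.multinomial Finset.univ y : ℝ) * (-1) ^ (∑ i, y i)

noncomputable def T (v : ℝ → ℝ) (i : ℕ) (x : ℝ) : ℝ :=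
  iteratedDeriv (i + 1) v x / ((i + 1).factorial : ℝ)

noncomputable def D (m : ℕ) (a : ℝ) (c : ℕ → ℝ) (z : Fin m → ℕ) : ℝ :=
  (a ^ ((∑ i, z i) + 1))⁻¹ * ∏ i : Fin m, c i ^ z i

/-- extension of a tuple by a zero entry -/
def ext {m : ℕ} (y : Fin m → ℕ) : Fin (m + 1) → ℕ := Fin.snoc y 0

@[simp] lemma ext_castSucc {m : ℕ} (y : Fin m → ℕ) (i : Fin m) :
    ext y i.castSucc = y i := Fin.snoc_castSucc ..

@[simp] lemma ext_last {m : ℕ} (y : Fin m → ℕ) : ext y (Fin.last m) = 0 := Fin.snoc_last ..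

def opA {m : ℕ} (y : Fin m → ℕ) : Fin (m + 1) → ℕ :=
  fun i => ext y i + (if i = 0 then 1 else 0)

def opB {m : ℕ} (j : Fin m) (y : Fin m → ℕ) : Fin (m + 1) → ℕ :=
  fun i => ext (Function.update y j (y j - 1)) i + (if i = j.succ then 1 else 0)


section Helpers

variable {m k : ℕ}

lemma comp_update {α β γ : Type*} [DecidableEq α] (G : α → β → γ) (h : α → β) (p : α) (a : β) :
    (fun i => G i (Function.update h p a i)) = Function.update (fun i => G i (h i)) p (G p a) := by
  funext i
  rcases eq_or_ne i p with rfl | hip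
  · simp
  · simp [Function.update_of_ne hip]

lemma K_ext (y : Fin m → ℕ) : ∑ i : Fin (m+1), ext y i = ∑ i, y i := by
  rw [Fin.sum_univ_castSucc]; simp

lemma wt_ext (y : Fin m → ℕ) :
    ∑ i : Fin (m+1), ((i : ℕ) + 1) * ext y i = ∑ i : Fin m, ((i : ℕ) + 1) * y i := by
  rw [Fin.sum_univ_castSucc]; simp

lemma prod_pow_ext (c : ℕ → ℝ) (y : Fin m → ℕ) :
    ∏ i : Fin (m+1), c i ^ ext y i = ∏ i : Fin m, c i ^ y i := by
  rw [Fin.prod_univ_castSucc]; simp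

lemma K_addIndic (g : Fin k → ℕ) (p : Fin k) :
    ∑ i, (g i + if i = p then 1 else 0) = (∑ i, g i) + 1 := by
  rw [Finset.sum_add_distrib]; simp

lemma wt_addIndic (g : Fin k → ℕ) (p : Fin k) :
    ∑ i : Fin k, ((i : ℕ) + 1) * (g i + if i = p then 1 else 0)
      = (∑ i : Fin k, ((i : ℕ) + 1) * g i) + ((p : ℕ) + 1) := by
  simp only [mul_add, mul_ite, mul_one, mul_zero]
  rw [Finset.sum_add_distrib]; simp

lemma prod_pow_addIndic (c : ℕ → ℝ) (g : Fin k → ℕ) (p : Fin k) :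
    ∏ i : Fin k, c (i : ℕ) ^ (g i + if i = p then 1 else 0)
      = c (p : ℕ) * ∏ i : Fin k, c (i : ℕ) ^ g i := by
  simp only [pow_add]
  rw [Finset.prod_mul_distrib]
  have : ∏ i : Fin k, c (i : ℕ) ^ (if i = p then 1 else 0) = c (p : ℕ) := by
    simp [pow_ite, Finset.prod_ite_eq']
  rw [this, mul_comm]

lemma K_update (g : Fin k → ℕ) (p : Fin k) (a : ℕ) :
    ∑ i : Fin k, Function.update g p a i = a + ∑ i ∈ Finset.univ.erase p, g i := by
  rw [Finset.sum_update_of_mem (Finset.mem_univ p), Finset.erase_eq]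

lemma wt_update (g : Fin k → ℕ) (p : Fin k) (a : ℕ) :
    ∑ i : Fin k, ((i : ℕ) + 1) * Function.update g p a i
      = ((p : ℕ) + 1) * a + ∑ i ∈ Finset.univ.erase p, ((i : ℕ) + 1) * g i := by
  rw [comp_update (fun (i : Fin k) (b : ℕ) => ((i : ℕ) + 1) * b),
    Finset.sum_update_of_mem (Finset.mem_univ p), Finset.erase_eq]

lemma prod_pow_update (c : ℕ → ℝ) (g : Fin k → ℕ) (p : Fin k) (a : ℕ) :
    ∏ i : Fin k, c (i : ℕ) ^ Function.update g p a i
      = c (p : ℕ) ^ a * ∏ i ∈ Finset.univ.erase p, c (i : ℕ) ^ g i := by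
  rw [comp_update (fun (i : Fin k) (b : ℕ) => c (i : ℕ) ^ b),
    Finset.prod_update_of_mem (Finset.mem_univ p), Finset.erase_eq]

lemma multinomial_mul_succ (f : Fin k → ℕ) (p : Fin k) :
    Nat.multinomial Finset.univ (Function.update f p (f p + 1)) * (f p + 1)
      = Nat.multinomial Finset.univ f * ((∑ i, f i) + 1) := by
  have h1 := Nat.multinomial_spec (Finset.univ : Finset (Fin k)) f
  have h2 := Nat.multinomial_spec (Finset.univ : Finset (Fin k)) (Function.update f p (f p + 1))
  have hp : ∏ i, (Function.update f p (f p + 1) i).factorial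
      = (f p + 1) * ∏ i, (f i).factorial := by
    rw [comp_update (fun (_ : Fin k) (b : ℕ) => b.factorial),
      Finset.prod_update_of_mem (Finset.mem_univ p), Nat.factorial_succ,
      ← Finset.mul_prod_erase Finset.univ (fun i => (f i).factorial) (Finset.mem_univ p),
      Finset.erase_eq]
    ring
  have hs : ∑ i, Function.update f p (f p + 1) i = (∑ i, f i) + 1 := by
    rw [K_update, ← Finset.add_sum_erase Finset.univ f (Finset.mem_univ p)]
    omega
  apply Nat.eq_of_mul_eq_mul_right (Finset.prod_pos fun i _ => (f i).factorial_pos)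
  calc Nat.multinomial Finset.univ (Function.update f p (f p + 1)) * (f p + 1)
        * ∏ i, (f i).factorial
      = (∏ i, (Function.update f p (f p + 1) i).factorial)
        * Nat.multinomial Finset.univ (Function.update f p (f p + 1)) := by rw [hp]; ring
    _ = ((∑ i, f i) + 1).factorial := by rw [h2, hs]
    _ = ((∑ i, f i) + 1) * (∑ i, f i).factorial := Nat.factorial_succ _
    _ = ((∑ i, f i) + 1) * ((∏ i, (f i).factorial) * Nat.multinomial Finset.univ f) := by rw [h1]
    _ = Nat.multinomial Finset.univ f * ((∑ i, f i) + 1) * ∏ i, (f i).factorial := by ring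

lemma multinomial_ext (f : Fin m → ℕ) :
    Nat.multinomial Finset.univ (ext f) = Nat.multinomial Finset.univ f := by
  have h1 := Nat.multinomial_spec (Finset.univ : Finset (Fin (m+1))) (ext f)
  have h2 := Nat.multinomial_spec (Finset.univ : Finset (Fin m)) f
  have hp : ∏ i : Fin (m+1), (ext f i).factorial = ∏ i : Fin m, (f i).factorial := by
    rw [Fin.prod_univ_castSucc]; simp
  apply Nat.eq_of_mul_eq_mul_left
    (Finset.prod_pos fun (i : Fin (m+1)) _ => (ext f i).factorial_pos)
  rw [h1, K_ext, hp, h2]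

end Helpers


section Ops

variable {m : ℕ}

lemma opA_eq_update (y : Fin m → ℕ) :
    opA y = Function.update (ext y) 0 (ext y 0 + 1) := by
  funext i
  rcases eq_or_ne i 0 with rfl | hi
  · simp [opA]
  · simp [opA, hi, Function.update_of_ne hi]

lemma K_opA (y : Fin m → ℕ) : ∑ i : Fin (m+1), opA y i = (∑ i, y i) + 1 := by
  rw [show (∑ i : Fin (m+1), opA y i) = ∑ i : Fin (m+1), (ext y i + if i = 0 then 1 else 0)
    from rfl, K_addIndic, K_ext]

lemma wt_opA (y : Fin m → ℕ) :
    ∑ i : Fin (m+1), ((i : ℕ) + 1) * opA y i = (∑ i : Fin m, ((i : ℕ) + 1) * y i) + 1 := by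
  rw [show (∑ i : Fin (m+1), ((i : ℕ) + 1) * opA y i)
      = ∑ i : Fin (m+1), ((i : ℕ) + 1) * (ext y i + if i = 0 then 1 else 0) from rfl,
    wt_addIndic, wt_ext]
  simp

lemma prod_pow_opA (c : ℕ → ℝ) (y : Fin m → ℕ) :
    ∏ i : Fin (m+1), c (i : ℕ) ^ opA y i = c 0 * ∏ i : Fin m, c (i : ℕ) ^ y i := by
  rw [show (∏ i : Fin (m+1), c (i : ℕ) ^ opA y i)
      = ∏ i : Fin (m+1), c (i : ℕ) ^ (ext y i + if i = 0 then 1 else 0) from rfl,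
    prod_pow_addIndic, prod_pow_ext]
  norm_num

lemma multinomial_opA (y : Fin m → ℕ) :
    Nat.multinomial Finset.univ (opA y) * opA y 0
      = Nat.multinomial Finset.univ y * ((∑ i, y i) + 1) := by
  rw [opA_eq_update]
  simp only [Function.update_self]
  rw [multinomial_mul_succ, multinomial_ext, K_ext]

variable (j : Fin m) (y : Fin m → ℕ)

lemma update_update (hy : 1 ≤ y j) :
    Function.update (Function.update y j (y j - 1)) j (Function.update y j (y j - 1) j + 1)
      = y := by
  funext i
  rcases eq_or_ne i j with rfl | hi
  · simp; omega
  · simp [Function.update_of_ne hi]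

lemma K_y' (hy : 1 ≤ y j) :
    (∑ i, Function.update y j (y j - 1) i) + 1 = ∑ i, y i := by
  rw [K_update, ← Finset.add_sum_erase Finset.univ y (Finset.mem_univ j)]
  omega

lemma wt_y' (hy : 1 ≤ y j) :
    (∑ i : Fin m, ((i : ℕ) + 1) * Function.update y j (y j - 1) i) + ((j : ℕ) + 1)
      = ∑ i : Fin m, ((i : ℕ) + 1) * y i := by
  rw [wt_update, ← Finset.add_sum_erase Finset.univ (fun i : Fin m => ((i : ℕ) + 1) * y i)
    (Finset.mem_univ j)]
  obtain ⟨r, hr⟩ := Nat.exists_eq_add_of_le hy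
  rw [hr]
  have h1 : 1 + r - 1 = r := by omega
  rw [h1, Nat.mul_add, Nat.mul_one]
  ring

lemma opB_eq_update :
    opB j y = Function.update (ext (Function.update y j (y j - 1))) j.succ
      (ext (Function.update y j (y j - 1)) j.succ + 1) := by
  funext i
  rcases eq_or_ne i j.succ with rfl | hi
  · simp [opB]
  · simp [opB, hi, Function.update_of_ne hi]

lemma K_opB (hy : 1 ≤ y j) : ∑ i : Fin (m+1), opB j y i = ∑ i, y i := by
  rw [show (∑ i : Fin (m+1), opB j y i)
      = ∑ i : Fin (m+1), (ext (Function.update y j (y j - 1)) i + if i = j.succ then 1 else 0)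
    from rfl, K_addIndic, K_ext, K_y' j y hy]

lemma wt_opB (hy : 1 ≤ y j) :
    ∑ i : Fin (m+1), ((i : ℕ) + 1) * opB j y i
      = (∑ i : Fin m, ((i : ℕ) + 1) * y i) + 1 := by
  rw [show (∑ i : Fin (m+1), ((i : ℕ) + 1) * opB j y i)
      = ∑ i : Fin (m+1), ((i : ℕ) + 1) *
          (ext (Function.update y j (y j - 1)) i + if i = j.succ then 1 else 0) from rfl,
    wt_addIndic, wt_ext, Fin.val_succ, ← wt_y' j y hy]
  ring

lemma prod_pow_opB (c : ℕ → ℝ) :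
    ∏ i : Fin (m+1), c (i : ℕ) ^ opB j y i
      = c ((j : ℕ) + 1) * (c (j : ℕ) ^ (y j - 1) * ∏ i ∈ Finset.univ.erase j, c (i : ℕ) ^ y i) := by
  rw [show (∏ i : Fin (m+1), c (i : ℕ) ^ opB j y i)
      = ∏ i : Fin (m+1), c (i : ℕ) ^
          (ext (Function.update y j (y j - 1)) i + if i = j.succ then 1 else 0) from rfl,
    prod_pow_addIndic, prod_pow_ext, prod_pow_update, Fin.val_succ]

lemma multinomial_opB (hy : 1 ≤ y j) :
    Nat.multinomial Finset.univ (opB j y) * opB j y j.succ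
      = Nat.multinomial Finset.univ y * y j := by
  rw [opB_eq_update]
  simp only [Function.update_self]
  rw [multinomial_mul_succ, multinomial_ext, K_ext]
  have h2 := multinomial_mul_succ (Function.update y j (y j - 1)) j
  rw [update_update j y hy] at h2
  have h3 : Function.update y j (y j - 1) j + 1 = y j := by simp; omega
  rw [h3] at h2
  exact h2.symm

end Ops

section Bounds

variable {m : ℕ} {z : Fin (m+1) → ℕ}

lemma pair_wt_le (hz : ∑ i : Fin (m+1), ((i : ℕ) + 1) * z i = m + 1)
    {p q : Fin (m+1)} (hpq : p ≠ q) :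
    ((p : ℕ) + 1) * z p + ((q : ℕ) + 1) * z q ≤ m + 1 := by
  have h : ∑ i ∈ ({p, q} : Finset (Fin (m+1))), ((i : ℕ) + 1) * z i
      ≤ ∑ i : Fin (m+1), ((i : ℕ) + 1) * z i :=
    Finset.sum_le_sum_of_subset (Finset.subset_univ _)
  rw [Finset.sum_pair hpq, hz] at h
  exact h

lemma apply_last_le_one (hz : ∑ i : Fin (m+1), ((i : ℕ) + 1) * z i = m + 1) :
    z (Fin.last m) ≤ 1 := by
  have h := Finset.single_le_sum (f := fun i : Fin (m+1) => ((i : ℕ) + 1) * z i)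
    (fun _ _ => Nat.zero_le _) (Finset.mem_univ (Fin.last m))
  rw [hz] at h
  simp only [Fin.val_last] at h
  by_contra hc
  push_neg at hc
  have : (m + 1) * 2 ≤ (m + 1) * z (Fin.last m) := Nat.mul_le_mul_left _ hc
  omega

lemma apply_last_eq_zero (hz : ∑ i : Fin (m+1), ((i : ℕ) + 1) * z i = m + 1)
    {p : Fin (m+1)} (hp : p ≠ Fin.last m) (hp1 : 1 ≤ z p) : z (Fin.last m) = 0 := by
  have h := pair_wt_le hz hp
  simp only [Fin.val_last] at h
  by_contra hc
  have h1 : 1 ≤ ((p : ℕ) + 1) * z p := Nat.one_le_iff_ne_zero.2 (by positivity)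
  have h2 : m + 1 ≤ (m + 1) * z (Fin.last m) :=
    Nat.le_mul_of_pos_right _ (Nat.pos_of_ne_zero hc)
  omega

end Bounds


section Claims

def invA {m : ℕ} (z : Fin (m+1) → ℕ) : Fin m → ℕ :=
  fun i => z i.castSucc - (if (i : ℕ) = 0 then 1 else 0)

lemma invA_opA {m : ℕ} (y : Fin m → ℕ) : invA (opA y) = y := by
  funext i
  have hc : (i.castSucc = (0 : Fin (m+1))) ↔ ((i : ℕ) = 0) := by
    rw [Fin.ext_iff]; simp
  simp only [invA, opA, ext_castSucc]
  by_cases h : (i : ℕ) = 0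
  · rw [if_pos (hc.2 h), if_pos h]; omega
  · rw [if_neg (fun hh => h (hc.1 hh)), if_neg h]; omega

lemma opA_invA {m : ℕ} {z : Fin (m+1) → ℕ}
    (hz : ∑ i : Fin (m+1), ((i : ℕ) + 1) * z i = m + 1) (h0 : 1 ≤ z 0) :
    opA (invA z) = z := by
  funext i
  induction i using Fin.lastCases with
  | last =>
    have hval : opA (invA z) (Fin.last m)
        = if (Fin.last m : Fin (m+1)) = 0 then 1 else 0 := by
      simp [opA]
    rw [hval]
    rcases Nat.eq_zero_or_pos m with rfl | hm
    · have heq : (Fin.last 0 : Fin 1) = 0 := rfl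
      rw [if_pos heq, heq]
      have h1 := apply_last_le_one hz
      rw [heq] at h1
      omega
    · have hne : (Fin.last m : Fin (m+1)) ≠ 0 := by
        intro hh
        have h2 := congrArg Fin.val hh
        simp at h2
        omega
      rw [if_neg hne]
      exact (apply_last_eq_zero hz (fun hh => hne hh.symm) h0).symm
  | cast i' =>
    have hc : (i'.castSucc = (0 : Fin (m+1))) ↔ ((i' : ℕ) = 0) := by
      rw [Fin.ext_iff]; simp
    simp only [opA, ext_castSucc, invA]
    by_cases h : (i' : ℕ) = 0
    · rw [if_pos h, if_pos (hc.2 h)]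
      have h1 : 1 ≤ z i'.castSucc := by rw [hc.2 h]; exact h0
      omega
    · rw [if_neg h, if_neg (fun hh => h (hc.1 hh))]; omega

def invB {m : ℕ} (j : Fin m) (z : Fin (m+1) → ℕ) : Fin m → ℕ :=
  fun i => (z i.castSucc + (if i = j then 1 else 0)) - (if (i : ℕ) = (j : ℕ) + 1 then 1 else 0)

lemma castSucc_eq_succ_iff {m : ℕ} (i j : Fin m) :
    i.castSucc = j.succ ↔ (i : ℕ) = (j : ℕ) + 1 := by
  rw [Fin.ext_iff]; simp

lemma invB_opB {m : ℕ} (j : Fin m) (y : Fin m → ℕ) (hy : 1 ≤ y j) :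
    invB j (opB j y) = y := by
  funext i
  have e1 : opB j y i.castSucc
      = Function.update y j (y j - 1) i + (if (i : ℕ) = (j : ℕ) + 1 then 1 else 0) := by
    simp only [opB, ext_castSucc]
    congr 1
    by_cases h : (i : ℕ) = (j : ℕ) + 1
    · rw [if_pos ((castSucc_eq_succ_iff i j).2 h), if_pos h]
    · rw [if_neg (fun hh => h ((castSucc_eq_succ_iff i j).1 hh)), if_neg h]
  simp only [invB, e1]
  by_cases h1 : i = j
  · subst h1
    have h2 : ¬ ((i : ℕ) = (i : ℕ) + 1) := by omega
    rw [if_neg h2, if_pos rfl, Function.update_self]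
    omega
  · rw [Function.update_of_ne h1, if_neg h1]
    split_ifs <;> omega

lemma opB_invB {m : ℕ} (j : Fin m) {z : Fin (m+1) → ℕ}
    (hz : ∑ i : Fin (m+1), ((i : ℕ) + 1) * z i = m + 1) (hj1 : 1 ≤ z j.succ) :
    opB j (invB j z) = z := by
  have hwj : invB j z j = z j.castSucc + 1 := by
    have h2 : ¬ ((j : ℕ) = (j : ℕ) + 1) := by omega
    simp [invB, h2]
  funext i
  induction i using Fin.lastCases with
  | last =>
    have hval : opB j (invB j z) (Fin.last m)
        = if (Fin.last m : Fin (m+1)) = j.succ then 1 else 0 := by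
      simp [opB]
    rw [hval]
    by_cases hjl : j.succ = Fin.last m
    · rw [if_pos hjl.symm]
      have h1 := apply_last_le_one hz
      rw [← hjl] at h1
      rw [← hjl]
      omega
    · rw [if_neg (fun hh => hjl hh.symm)]
      exact (apply_last_eq_zero hz hjl hj1).symm
  | cast i' =>
    have e1 : opB j (invB j z) i'.castSucc
        = Function.update (invB j z) j (invB j z j - 1) i'
          + (if (i' : ℕ) = (j : ℕ) + 1 then 1 else 0) := by
      simp only [opB, ext_castSucc]
      congr 1
      by_cases h : (i' : ℕ) = (j : ℕ) + 1
      · rw [if_pos ((castSucc_eq_succ_iff i' j).2 h), if_pos h]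
      · rw [if_neg (fun hh => h ((castSucc_eq_succ_iff i' j).1 hh)), if_neg h]
    rw [e1]
    by_cases h1 : i' = j
    · subst h1
      have h2 : ¬ ((i' : ℕ) = (i' : ℕ) + 1) := by omega
      rw [Function.update_self, hwj, if_neg h2]
      omega
    · rw [Function.update_of_ne h1]
      by_cases h2 : (i' : ℕ) = (j : ℕ) + 1
      · have hcs : i'.castSucc = j.succ := (castSucc_eq_succ_iff i' j).2 h2
        have h3 : 1 ≤ z i'.castSucc := by rw [hcs]; exact hj1
        simp only [invB, if_neg h1, if_pos h2]
        omega
      · simp only [invB, if_neg h1, if_neg h2]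
        omega

lemma claimA (n : ℕ) (a : ℝ) (c : ℕ → ℝ) :
    ∑ y ∈ S n, (-((∑ i, y i : ℕ) : ℝ) - 1) * C y * D (n+1) a c (opA y)
      = ∑ z ∈ S (n+1), ((z 0 : ℕ) : ℝ) * C z * D (n+1) a c z := by
  have hside : ∀ z ∈ S (n+1),
      (((z 0 : ℕ) : ℝ) * C z * D (n+1) a c z) ≠ 0 → z 0 ≠ 0 := by
    intro z _ hne h0
    apply hne
    rw [h0]
    simp
  rw [← Finset.sum_filter_of_ne hside]
  refine Finset.sum_nbij' opA invA ?_ ?_ ?_ ?_ ?_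
  · intro y hy
    rw [mem_S] at hy
    refine Finset.mem_filter.2 ⟨mem_S.2 ?_, ?_⟩
    · rw [wt_opA, hy]
    · simp [opA]
  · intro z hz
    obtain ⟨hz1, hz0⟩ := Finset.mem_filter.1 hz
    rw [mem_S] at hz1
    have hri := opA_invA hz1 (Nat.one_le_iff_ne_zero.2 hz0)
    have hwt := wt_opA (invA z)
    rw [hri, hz1] at hwt
    rw [mem_S]
    omega
  · intro y _
    exact invA_opA y
  · intro z hz
    obtain ⟨hz1, hz0⟩ := Finset.mem_filter.1 hz
    exact opA_invA (mem_S.1 hz1) (Nat.one_le_iff_ne_zero.2 hz0)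
  · intro y _
    have hco : ((opA y 0 : ℕ) : ℝ) * C (opA y) = (-((∑ i, y i : ℕ) : ℝ) - 1) * C y := by
      unfold C
      rw [K_opA]
      have hmul : ((Nat.multinomial Finset.univ (opA y) * opA y 0 : ℕ) : ℝ)
          = ((Nat.multinomial Finset.univ y * ((∑ i, y i) + 1) : ℕ) : ℝ) := by
        exact_mod_cast multinomial_opA y
      push_cast at hmul ⊢
      rw [pow_succ]
      linear_combination (-(-1 : ℝ) ^ (∑ i, y i)) * hmul
    linear_combination (-(D (n+1) a c (opA y))) * hco

lemma claimB (n : ℕ) (j : Fin n) (a : ℝ) (c : ℕ → ℝ) :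
    ∑ y ∈ S n, ((y j : ℝ) * ((j : ℕ) + 2)) * C y * D (n+1) a c (opB j y)
      = ∑ z ∈ S (n+1), (((j : ℕ) + 2) * (z j.succ : ℝ)) * C z * D (n+1) a c z := by
  have hsideL : ∀ y ∈ S n,
      (((y j : ℝ) * ((j : ℕ) + 2)) * C y * D (n+1) a c (opB j y)) ≠ 0 → y j ≠ 0 := by
    intro y _ hne h0
    apply hne
    rw [h0]
    simp
  have hsideR : ∀ z ∈ S (n+1),
      ((((j : ℕ) + 2 : ℝ) * (z j.succ : ℝ)) * C z * D (n+1) a c z) ≠ 0 → z j.succ ≠ 0 := by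
    intro z _ hne h0
    apply hne
    rw [h0]
    simp
  rw [← Finset.sum_filter_of_ne hsideL, ← Finset.sum_filter_of_ne hsideR]
  refine Finset.sum_nbij' (opB j) (invB j) ?_ ?_ ?_ ?_ ?_
  · intro y hy
    obtain ⟨hy1, hy0⟩ := Finset.mem_filter.1 hy
    rw [mem_S] at hy1
    have hyj : 1 ≤ y j := Nat.one_le_iff_ne_zero.2 hy0
    refine Finset.mem_filter.2 ⟨mem_S.2 ?_, ?_⟩
    · rw [wt_opB j y hyj, hy1]
    · rw [opB_eq_update]
      simp
  · intro z hz
    obtain ⟨hz1, hz0⟩ := Finset.mem_filter.1 hz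
    rw [mem_S] at hz1
    have hj1 : 1 ≤ z j.succ := Nat.one_le_iff_ne_zero.2 hz0
    have hinvj : 1 ≤ invB j z j := by
      have h2 : ¬ ((j : ℕ) = (j : ℕ) + 1) := by omega
      simp [invB, h2]
    have hri := opB_invB j hz1 hj1
    have hwt := wt_opB j (invB j z) hinvj
    rw [hri, hz1] at hwt
    refine Finset.mem_filter.2 ⟨mem_S.2 (by omega), by omega⟩
  · intro y hy
    obtain ⟨_, hy0⟩ := Finset.mem_filter.1 hy
    exact invB_opB j y (Nat.one_le_iff_ne_zero.2 hy0)
  · intro z hz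
    obtain ⟨hz1, hz0⟩ := Finset.mem_filter.1 hz
    exact opB_invB j (mem_S.1 hz1) (Nat.one_le_iff_ne_zero.2 hz0)
  · intro y hy
    obtain ⟨_, hy0⟩ := Finset.mem_filter.1 hy
    have hyj : 1 ≤ y j := Nat.one_le_iff_ne_zero.2 hy0
    have hco : ((opB j y j.succ : ℕ) : ℝ) * C (opB j y) = ((y j : ℕ) : ℝ) * C y := by
      unfold C
      rw [K_opB j y hyj]
      have hmul : ((Nat.multinomial Finset.univ (opB j y) * opB j y j.succ : ℕ) : ℝ)
          = ((Nat.multinomial Finset.univ y * y j : ℕ) : ℝ) := by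
        exact_mod_cast multinomial_opB j y hyj
      push_cast at hmul ⊢
      linear_combination ((-1 : ℝ) ^ (∑ i, y i)) * hmul
    calc ((y j : ℝ) * ((j : ℕ) + 2)) * C y * D (n+1) a c (opB j y)
        = (((y j : ℕ) : ℝ) * C y) * ((j : ℕ) + 2) * D (n+1) a c (opB j y) := by ring
      _ = (((opB j y j.succ : ℕ) : ℝ) * C (opB j y)) * ((j : ℕ) + 2)
            * D (n+1) a c (opB j y) := by rw [hco]
      _ = (((j : ℕ) + 2 : ℝ) * (opB j y j.succ : ℝ)) * C (opB j y)
            * D (n+1) a c (opB j y) := by ring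

lemma key (n : ℕ) (a : ℝ) (c : ℕ → ℝ) :
    ∑ y ∈ S n, C y * ((-((∑ i, y i : ℕ) : ℝ) - 1) * D (n+1) a c (opA y)
        + ∑ j : Fin n, ((y j : ℝ) * ((j : ℕ) + 2)) * D (n+1) a c (opB j y))
      = ((n : ℝ) + 1) * ∑ z ∈ S (n+1), C z * D (n+1) a c z := by
  have lhs_split : ∑ y ∈ S n, C y * ((-((∑ i, y i : ℕ) : ℝ) - 1) * D (n+1) a c (opA y)
        + ∑ j : Fin n, ((y j : ℝ) * ((j : ℕ) + 2)) * D (n+1) a c (opB j y))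
      = (∑ y ∈ S n, (-((∑ i, y i : ℕ) : ℝ) - 1) * C y * D (n+1) a c (opA y))
        + ∑ j : Fin n, ∑ y ∈ S n,
            ((y j : ℝ) * ((j : ℕ) + 2)) * C y * D (n+1) a c (opB j y) := by
    rw [Finset.sum_comm]
    rw [← Finset.sum_add_distrib]
    refine Finset.sum_congr rfl fun y _ => ?_
    rw [mul_add, Finset.mul_sum]
    congr 1
    · ring
    · refine Finset.sum_congr rfl fun i _ => ?_
      ring
  rw [lhs_split, claimA]
  have : ∀ j : Fin n, ∑ y ∈ S n, ((y j : ℝ) * ((j : ℕ) + 2)) * C y * D (n+1) a c (opB j y)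
      = ∑ z ∈ S (n+1), (((j : ℕ) + 2) * (z j.succ : ℝ)) * C z * D (n+1) a c z :=
    fun j => claimB n j a c
  rw [Finset.sum_congr rfl fun j _ => this j, Finset.sum_comm, ← Finset.sum_add_distrib,
    Finset.mul_sum]
  refine Finset.sum_congr rfl fun z hz => ?_
  have hwt := mem_S.1 hz
  have hsum : ((z 0 : ℕ) : ℝ) + ∑ j : Fin n, (((j : ℕ) + 2) * (z j.succ : ℝ))
      = (n : ℝ) + 1 := by
    have h1 : (z 0 : ℕ) + ∑ j : Fin n, (((j : ℕ) + 2) * z j.succ) = n + 1 := by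
      rw [Fin.sum_univ_succ] at hwt
      simp only [Fin.val_zero, zero_add, one_mul, Fin.val_succ] at hwt
      have heq : ∑ j : Fin n, (((j : ℕ) + 2) * z j.succ)
          = ∑ j : Fin n, (((j : ℕ) + 1 + 1) * z j.succ) :=
        Finset.sum_congr rfl fun j _ => rfl
      omega
    exact_mod_cast h1
  calc ((z 0 : ℕ) : ℝ) * C z * D (n+1) a c z
        + ∑ j : Fin n, (((j : ℕ) + 2) * (z j.succ : ℝ)) * C z * D (n+1) a c z
      = (((z 0 : ℕ) : ℝ) + ∑ j : Fin n, (((j : ℕ) + 2) * (z j.succ : ℝ)))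
          * (C z * D (n+1) a c z) := by
        rw [add_mul, Finset.sum_mul]
        congr 1
        · ring
        · exact Finset.sum_congr rfl fun j _ => by ring
      _ = ((n : ℝ) + 1) * (C z * D (n+1) a c z) := by rw [hsum]

end Claims


section Analytic

lemma hasDerivAt_T (n : ℕ) (v : ℝ → ℝ) (x : ℝ) (j : Fin n)
    (hd : ∀ i, i ≤ n → DifferentiableAt ℝ (iteratedDeriv i v) x) :
    HasDerivAt (fun x' => T v (j : ℕ) x') ((((j : ℕ) + 2) : ℝ) * T v ((j : ℕ) + 1) x) x := by
  have hdj : DifferentiableAt ℝ (iteratedDeriv ((j : ℕ) + 1) v) x := hd _ (by omega)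
  have h1 : HasDerivAt (iteratedDeriv ((j : ℕ) + 1) v) (iteratedDeriv ((j : ℕ) + 2) v x) x := by
    have h := hdj.hasDerivAt
    have he : iteratedDeriv ((j : ℕ) + 2) v x = deriv (iteratedDeriv ((j : ℕ) + 1) v) x := by
      rw [show ((j : ℕ) + 2) = ((j : ℕ) + 1) + 1 from rfl, iteratedDeriv_succ]
    rw [he]
    exact h
  have h2 := h1.div_const ((((j : ℕ) + 1).factorial : ℕ) : ℝ)
  convert h2 using 1
  · rfl
  · rfl
  · rfl
  unfold T
  rw [show ((j : ℕ) + 1 + 1) = ((j : ℕ) + 2) from rfl, show ((j : ℕ) + 2) = ((j : ℕ) + 1) + 1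
    from rfl, Nat.factorial_succ]
  have hfac : ((((j : ℕ) + 1).factorial : ℕ) : ℝ) ≠ 0 := by
    exact_mod_cast (Nat.factorial_pos _).ne'
  push_cast
  field_simp
  ring

lemma hasDerivAt_H (n : ℕ) (v : ℝ → ℝ) (y : Fin n → ℕ) (x : ℝ)
    (hd : ∀ i, i ≤ n → DifferentiableAt ℝ (iteratedDeriv i v) x) (hx : v x ≠ 0) :
    HasDerivAt (fun x' => D n (v x') (fun i => T v i x') y)
      ((-((∑ i, y i : ℕ) : ℝ) - 1) * D (n+1) (v x) (fun i => T v i x) (opA y)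
        + ∑ j : Fin n, ((y j : ℝ) * ((j : ℕ) + 2)) * D (n+1) (v x) (fun i => T v i x) (opB j y))
      x := by
  have hv1 : HasDerivAt v (iteratedDeriv 1 v x) x := by
    have h := (hd 0 (Nat.zero_le n)).hasDerivAt
    rw [iteratedDeriv_zero] at h
    rw [iteratedDeriv_one]
    exact h
  have hP : HasDerivAt (fun x' => ∏ i : Fin n, (T v (i : ℕ) x') ^ y i)
      (∑ j : Fin n, (∏ i ∈ Finset.univ.erase j, (T v (i : ℕ) x) ^ y i)
          • (((y j : ℕ) : ℝ) * (T v (j : ℕ) x) ^ (y j - 1)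
            * ((((j : ℕ) + 2) : ℝ) * T v ((j : ℕ) + 1) x))) x :=
    HasDerivAt.fun_finsetProd fun j _ => (hasDerivAt_T n v x j hd).pow (y j)
  have hQ : HasDerivAt (fun x' => ((v x') ^ ((∑ i, y i) + 1))⁻¹)
      (-((((∑ i, y i) + 1 : ℕ) : ℝ) * (v x) ^ ((∑ i, y i) + 1 - 1) * iteratedDeriv 1 v x)
        / ((v x) ^ ((∑ i, y i) + 1)) ^ 2) x := by
    exact (hv1.pow ((∑ i, y i) + 1)).inv (pow_ne_zero _ hx)
  have hH := hQ.mul hP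
  have hfun : (fun x' => D n (v x') (fun i => T v i x') y)
      = fun x' => ((v x') ^ ((∑ i, y i) + 1))⁻¹ * ∏ i : Fin n, (T v (i : ℕ) x') ^ y i := rfl
  rw [hfun]
  convert hH using 1
  · rfl
  · rfl
  · rfl
  -- value equality
  rw [Finset.mul_sum]
  congr 1
  · -- first term
    have hKA := K_opA y
    have hPA := prod_pow_opA (fun i => T v i x) y
    unfold D
    rw [hKA, hPA]
    have hT0 : T v 0 x = iteratedDeriv 1 v x := by
      unfold T
      norm_num
    rw [hT0, Nat.add_sub_cancel]
    have hxp : (v x) ^ ((∑ i, y i) + 1) ≠ 0 := pow_ne_zero _ hx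
    field_simp
    push_cast
    ring
  · refine Finset.sum_congr rfl fun j _ => ?_
    rcases Nat.eq_zero_or_pos (y j) with h0 | h1
    · rw [h0]
      simp
    · have hKB := K_opB j y h1
      have hPB := prod_pow_opB j y (fun i => T v i x)
      unfold D
      rw [hKB, hPB]
      rw [smul_eq_mul]
      ring

lemma deriv_step (n : ℕ) (v : ℝ → ℝ) (x : ℝ)
    (hd : ∀ i, i ≤ n → DifferentiableAt ℝ (iteratedDeriv i v) x) (hx : v x ≠ 0) :
    deriv (fun x' => (n.factorial : ℝ)
        * ∑ y ∈ S n, C y * D n (v x') (fun i => T v i x') y) x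
      = ((n+1).factorial : ℝ) * ∑ z ∈ S (n+1), C z * D (n+1) (v x) (fun i => T v i x) z := by
  have hsum : HasDerivAt (fun x' => ∑ y ∈ S n, C y * D n (v x') (fun i => T v i x') y)
      (∑ y ∈ S n, C y * ((-((∑ i, y i : ℕ) : ℝ) - 1) * D (n+1) (v x) (fun i => T v i x) (opA y)
        + ∑ j : Fin n, ((y j : ℝ) * ((j : ℕ) + 2)) * D (n+1) (v x) (fun i => T v i x) (opB j y)))
      x :=
    HasDerivAt.fun_sum fun y _ => (hasDerivAt_H n v y x hd hx).const_mul (C y)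
  rw [(hsum.const_mul (n.factorial : ℝ)).deriv, key n (v x) (fun i => T v i x),
    Nat.factorial_succ]
  push_cast
  ring

end Analytic

lemma main_lemma (n : ℕ) (x₀ : ℝ) (v : ℝ → ℝ)
    (hv : ∀ i < n, ∀ᶠ x in nhds x₀, DifferentiableAt ℝ (iteratedDeriv i v) x)
    (hvne : ∀ᶠ x in nhds x₀, v x ≠ 0) :
    ∀ᶠ x in nhds x₀, iteratedDeriv n (fun x' => 1 / v x') x
      = (n.factorial : ℝ) * ∑ y ∈ S n, C y * D n (v x) (fun i => T v i x) y := by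
  induction n with
  | zero =>
    refine Filter.Eventually.of_forall fun x => ?_
    have hS : S 0 = {(fun i => 0 : Fin 0 → ℕ)} := by
      ext y
      simp only [mem_S, Finset.mem_singleton]
      constructor
      · intro _
        funext i
        exact absurd i.isLt (by omega)
      · intro _
        simp
    rw [iteratedDeriv_zero, hS, Finset.sum_singleton]
    unfold C D
    simp [Nat.multinomial, one_div]
  | succ n ih =>
    have hvn : ∀ i < n, ∀ᶠ x in nhds x₀, DifferentiableAt ℝ (iteratedDeriv i v) x :=
      fun i hi => hv i (Nat.lt_succ_of_lt hi)
    have E : (iteratedDeriv n fun x' => 1 / v x')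
        =ᶠ[nhds x₀] fun x => (n.factorial : ℝ)
          * ∑ y ∈ S n, C y * D n (v x) (fun i => T v i x) y := ih hvn
    have E' := E.deriv
    have hall : ∀ᶠ x in nhds x₀, ∀ i ∈ Finset.range (n+1),
        DifferentiableAt ℝ (iteratedDeriv i v) x := by
      rw [Filter.eventually_all_finset]
      intro i hi
      exact hv i (Finset.mem_range.1 hi)
    filter_upwards [E', hall, hvne] with x hE hall' hvx
    rw [iteratedDeriv_succ, hE,
      deriv_step n v x (fun i hi => hall' i (Finset.mem_range.2 (Nat.lt_succ_of_le hi))) hvx]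

end ReciprocalRuleAux

theorem reciprocal_rule (n : ℕ) (x₀ : ℝ) (v : ℝ → ℝ)
    (hv : ∀ i < n, ∀ᶠ x in nhds x₀, DifferentiableAt ℝ (iteratedDeriv i v) x)
    (hvne : ∀ᶠ x in nhds x₀, v x ≠ 0) :
    iteratedDeriv n (fun x => 1 / v x) x₀ =
      (n.factorial : ℝ) *
        ∑ y ∈ (Fintype.piFinset fun _ : Fin n => Finset.range (n + 1)).filter
            (fun y => ∑ i : Fin n, ((i : ℕ) + 1) * y i = n),
          (Nat.multinomial Finset.univ y : ℝ) * (-1) ^ (∑ i, y i) /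
              (v x₀) ^ ((∑ i, y i) + 1) *
            ∏ i : Fin n,
              (iteratedDeriv ((i : ℕ) + 1) v x₀ / (((i : ℕ) + 1).factorial : ℝ)) ^ y i := by
  have h := (ReciprocalRuleAux.main_lemma n x₀ v hv hvne).self_of_nhds
  rw [h]
  congr 1
  refine Finset.sum_congr rfl fun y hy => ?_
  unfold ReciprocalRuleAux.C ReciprocalRuleAux.D ReciprocalRuleAux.T
  rw [div_eq_mul_inv]
  ring
end

section
/- Let n be a natural number, let x₀ be a real number, and let u, v : ℝ → ℝ be n times differentiable in a neighborhood of x₀ with v nonvanishing in a neighborhood of x₀. Then the n-th derivative of x ↦ u(x)/v(x) at x₀ equals n! · Σ_{ℓ=0}^{n} [ ( u⁽ⁿ⁻ℓ⁾(x₀)/(n−ℓ)! ) · Σ_{y} ( ( (Σᵢ yᵢ)! / (y₁! ⋯ y_ℓ!) ) · (−1)^{Σᵢ yᵢ} / v(x₀)^{(Σᵢ yᵢ)+1} · Πᵢ₌₁^ℓ ( v⁽ⁱ⁾(x₀)/i! )^{yᵢ} ) ], where the inner sum runs over all tuples y = (y₁, …, y_ℓ) of nonnegative integers satisfying Σᵢ₌₁^ℓ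 i·yᵢ = ℓ. -/
open Finset Filter

lemma evEq_iteratedDeriv {f g : ℝ → ℝ} {x₀ : ℝ} (h : f =ᶠ[nhds x₀] g) (i : ℕ) :
    iteratedDeriv i f =ᶠ[nhds x₀] iteratedDeriv i g := by
  have h2 : ∀ᶠ y in nhds x₀, f =ᶠ[nhds y] g := eventually_eventually_nhds.mpr h
  filter_upwards [h2] with y hy using hy.iteratedDeriv_eq i

lemma leibniz_ev (x₀ : ℝ) :
    ∀ (m : ℕ) (f g : ℝ → ℝ),
      (∀ i < m, ∀ᶠ x in nhds x₀, DifferentiableAt ℝ (iteratedDeriv i f) x) →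
      (∀ i < m, ∀ᶠ x in nhds x₀, DifferentiableAt ℝ (iteratedDeriv i g) x) →
      ∀ᶠ x in nhds x₀, iteratedDeriv m (fun y => f y * g y) x =
        ∑ j ∈ Finset.range (m + 1),
          (m.choose j : ℝ) * (iteratedDeriv j f x * iteratedDeriv (m - j) g x) := by
  intro m
  induction m with
  | zero =>
    intro f g _ _
    filter_upwards with x
    simp [iteratedDeriv_zero]
  | succ m ih =>
    intro f g hf hg
    have IH := ih f g (fun i hi => hf i (hi.trans (Nat.lt_succ_self m)))
      (fun i hi => hg i (hi.trans (Nat.lt_succ_self m)))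
    have IH2 : ∀ᶠ x in nhds x₀, iteratedDeriv m (fun y => f y * g y) =ᶠ[nhds x]
        fun y => ∑ j ∈ Finset.range (m + 1),
          (m.choose j : ℝ) * (iteratedDeriv j f y * iteratedDeriv (m - j) g y) :=
      eventually_eventually_nhds.mpr IH
    have hdf : ∀ᶠ x in nhds x₀, ∀ j ∈ Finset.range (m + 1),
        DifferentiableAt ℝ (iteratedDeriv j f) x :=
      (Finset.range (m + 1)).eventually_all.mpr
        (fun j hj => hf j (Finset.mem_range.mp hj))
    have hdg : ∀ᶠ x in nhds x₀, ∀ j ∈ Finset.range (m + 1),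
        DifferentiableAt ℝ (iteratedDeriv j g) x :=
      (Finset.range (m + 1)).eventually_all.mpr
        (fun j hj => hg j (Finset.mem_range.mp hj))
    filter_upwards [IH2, hdf, hdg] with x hx hdfx hdgx
    rw [iteratedDeriv_succ, hx.deriv_eq]
    rw [deriv_fun_sum (fun j hj => ((hdfx j hj).fun_mul
      (hdgx (m - j) (Finset.mem_range.mpr (by omega)))).const_mul _)]
    have hderiv : ∀ j ∈ Finset.range (m + 1),
        deriv (fun y => (m.choose j : ℝ) *
          (iteratedDeriv j f y * iteratedDeriv (m - j) g y)) x =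
        (m.choose j : ℝ) * (iteratedDeriv (j + 1) f x * iteratedDeriv (m - j) g x +
          iteratedDeriv j f x * iteratedDeriv (m - j + 1) g x) := by
      intro j hj
      have h1 := hdfx j hj
      have h2 := hdgx (m - j) (Finset.mem_range.mpr (by omega))
      rw [deriv_const_mul _ (h1.fun_mul h2), deriv_fun_mul h1 h2, ← iteratedDeriv_succ,
        ← iteratedDeriv_succ]
    rw [Finset.sum_congr rfl hderiv,
      Finset.sum_choose_succ_mul (fun a b => iteratedDeriv a f x * iteratedDeriv b g x) m]
    simp only [mul_add]
    rw [Finset.sum_add_distrib, add_comm]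
    congr 1
    · apply Finset.sum_congr rfl
      intro j hj
      have : m + 1 - j = m - j + 1 := by have := Finset.mem_range.mp hj; omega
      rw [this]

lemma evd_mul (x₀ : ℝ) (m : ℕ) (f g : ℝ → ℝ)
    (hf : ∀ i < m, ∀ᶠ x in nhds x₀, DifferentiableAt ℝ (iteratedDeriv i f) x)
    (hg : ∀ i < m, ∀ᶠ x in nhds x₀, DifferentiableAt ℝ (iteratedDeriv i g) x) :
    ∀ i < m, ∀ᶠ x in nhds x₀, DifferentiableAt ℝ (iteratedDeriv i (fun y => f y * g y)) x := by
  intro i hi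
  have L := leibniz_ev x₀ i f g (fun j hj => hf j (hj.trans hi)) (fun j hj => hg j (hj.trans hi))
  have L2 := eventually_eventually_nhds.mpr L
  have hdf : ∀ᶠ x in nhds x₀, ∀ j ∈ Finset.range (i + 1),
      DifferentiableAt ℝ (iteratedDeriv j f) x :=
    (Finset.range (i + 1)).eventually_all.mpr
      (fun j hj => hf j (lt_of_le_of_lt (Nat.lt_succ_iff.mp (Finset.mem_range.mp hj)) hi))
  have hdg : ∀ᶠ x in nhds x₀, ∀ j ∈ Finset.range (i + 1),
      DifferentiableAt ℝ (iteratedDeriv j g) x :=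
    (Finset.range (i + 1)).eventually_all.mpr
      (fun j hj => hg j (lt_of_le_of_lt (Nat.lt_succ_iff.mp (Finset.mem_range.mp hj)) hi))
  filter_upwards [L2, hdf, hdg] with x hx hdfx hdgx
  have heq : iteratedDeriv i (fun y => f y * g y) =ᶠ[nhds x]
      fun y => ∑ j ∈ Finset.range (i + 1),
        (i.choose j : ℝ) * (iteratedDeriv j f y * iteratedDeriv (i - j) g y) := hx
  rw [heq.differentiableAt_iff]
  exact DifferentiableAt.fun_sum fun j hj => ((hdfx j hj).fun_mul
    (hdgx (i - j) (Finset.mem_range.mpr (by omega)))).const_mul _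

lemma evd_deriv (x₀ : ℝ) (m : ℕ) (f : ℝ → ℝ)
    (hf : ∀ i < m + 1, ∀ᶠ x in nhds x₀, DifferentiableAt ℝ (iteratedDeriv i f) x) :
    ∀ i < m, ∀ᶠ x in nhds x₀, DifferentiableAt ℝ (iteratedDeriv i (deriv f)) x := by
  intro i hi
  have := hf (i + 1) (by omega)
  rwa [iteratedDeriv_succ'] at this

lemma evd_inv (x₀ : ℝ) (v : ℝ → ℝ) (hvne : ∀ᶠ x in nhds x₀, v x ≠ 0) :
    ∀ m, (∀ i < m, ∀ᶠ x in nhds x₀, DifferentiableAt ℝ (iteratedDeriv i v) x) →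
      ∀ i < m, ∀ᶠ x in nhds x₀, DifferentiableAt ℝ (iteratedDeriv i (fun y => (v y)⁻¹)) x := by
  intro m
  induction m with
  | zero => exact fun _ i hi => absurd hi (Nat.not_lt_zero i)
  | succ m ih =>
    intro hv i hi
    have hv0 : ∀ᶠ x in nhds x₀, DifferentiableAt ℝ v x := by
      simpa [iteratedDeriv_zero] using hv 0 (Nat.succ_pos m)
    match i, hi with
    | 0, _ =>
      simp only [iteratedDeriv_zero]
      filter_upwards [hv0, hvne] with x h1 h2 using h1.inv h2
    | j + 1, hi =>
      have hG : (deriv fun y => (v y)⁻¹) =ᶠ[nhds x₀]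
          fun y => (-deriv v y) * ((v y)⁻¹ * (v y)⁻¹) := by
        filter_upwards [hv0, hvne] with x h1 h2
        rw [deriv_fun_inv'' h1 h2, pow_two, div_eq_mul_inv, mul_inv]
      have hinv : ∀ k < m, ∀ᶠ x in nhds x₀,
          DifferentiableAt ℝ (iteratedDeriv k (fun y => (v y)⁻¹)) x :=
        ih (fun k hk => hv k (by omega))
      have hndv : ∀ k < m, ∀ᶠ x in nhds x₀,
          DifferentiableAt ℝ (iteratedDeriv k (fun y => -deriv v y)) x := by
        intro k hk
        have h2 := evd_deriv x₀ m v hv k hk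
        have : iteratedDeriv k (fun y => -deriv v y) = fun y => -(iteratedDeriv k (deriv v) y) := by
          funext a
          exact iteratedDeriv_neg k (deriv v) a
        rw [this]
        filter_upwards [h2] with x hx using hx.neg
      have hGd : ∀ k < m, ∀ᶠ x in nhds x₀, DifferentiableAt ℝ
          (iteratedDeriv k (fun y => (-deriv v y) * ((v y)⁻¹ * (v y)⁻¹))) x :=
        evd_mul x₀ m _ _ hndv (evd_mul x₀ m _ _ hinv hinv)
      have hj : j < m := by omega
      rw [iteratedDeriv_succ']
      have hEq : ∀ᶠ x in nhds x₀, (deriv fun y => (v y)⁻¹) =ᶠ[nhds x]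
          fun y => (-deriv v y) * ((v y)⁻¹ * (v y)⁻¹) := eventually_eventually_nhds.mpr hG
      filter_upwards [hGd j hj, hEq] with x h1 h2
      exact (evEq_iteratedDeriv h2 j).differentiableAt_iff.mpr h1

def Qset (N m : ℕ) : Finset (Fin N → ℕ) :=
  (Fintype.piFinset fun _ : Fin N => Finset.range (N + 1)).filter
    (fun y => ∑ i : Fin N, ((i : ℕ) + 1) * y i = m)

noncomputable def Tb (b : ℕ → ℝ) (N : ℕ) (y : Fin N → ℕ) : ℝ :=
  (Nat.multinomial Finset.univ y : ℝ) * (-1) ^ (∑ i, y i) / (b 0) ^ ((∑ i, y i) + 1) *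
    ∏ i : Fin N, (b ((i : ℕ) + 1)) ^ (y i)

noncomputable def Cb (b : ℕ → ℝ) (m : ℕ) : ℝ := ∑ y ∈ Qset m m, Tb b m y

lemma Qset_weight {N m : ℕ} {y : Fin N → ℕ} (hy : y ∈ Qset N m) :
    ∑ i : Fin N, ((i : ℕ) + 1) * y i = m := (Finset.mem_filter.mp hy).2

lemma single_le_weight {N m : ℕ} {y : Fin N → ℕ} (hy : y ∈ Qset N m) (i : Fin N) :
    ((i : ℕ) + 1) * y i ≤ m := by
  rw [← Qset_weight hy]
  exact Finset.single_le_sum (f := fun i : Fin N => ((i : ℕ) + 1) * y i)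
    (fun _ _ => Nat.zero_le _) (Finset.mem_univ i)

lemma mem_Qset_iff {N m : ℕ} (h : m ≤ N) {y : Fin N → ℕ} :
    y ∈ Qset N m ↔ ∑ i : Fin N, ((i : ℕ) + 1) * y i = m := by
  constructor
  · exact Qset_weight
  · intro hw
    refine Finset.mem_filter.mpr ⟨Fintype.mem_piFinset.mpr fun i => ?_, hw⟩
    rw [Finset.mem_range]
    have h1 : ((i : ℕ) + 1) * y i ≤ m := by
      rw [← hw]
      exact Finset.single_le_sum (f := fun i : Fin N => ((i : ℕ) + 1) * y i)
        (fun _ _ => Nat.zero_le _) (Finset.mem_univ i)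
    nlinarith [Nat.zero_le (y i)]

lemma Qset_vanish {N m : ℕ} {y : Fin N → ℕ} (hy : y ∈ Qset N m) (i : Fin N)
    (hi : m ≤ (i : ℕ)) : y i = 0 := by
  have := single_le_weight hy i
  nlinarith [Nat.zero_le (y i)]

lemma mult_cast {N : ℕ} (y : Fin N → ℕ) :
    (Nat.multinomial Finset.univ y : ℝ) =
      ((∑ i, y i).factorial : ℝ) / ∏ i, ((y i).factorial : ℝ) := by
  have h := Nat.multinomial_spec Finset.univ y
  have hne : (∏ i, ((y i).factorial : ℝ)) ≠ 0 := by positivity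
  rw [eq_div_iff hne, mul_comm]
  exact_mod_cast congrArg (fun k : ℕ => (k : ℝ)) h

@[to_additive]
lemma prod_trunc {M : Type*} [CommMonoid M] {N m : ℕ} (h : m ≤ N) (F : Fin N → M)
    (hF : ∀ i : Fin N, m ≤ (i : ℕ) → F i = 1) :
    ∏ i : Fin N, F i = ∏ k : Fin m, F (Fin.castLE h k) := by
  classical
  set G : ℕ → M := fun i => if hi : i < N then F ⟨i, hi⟩ else 1 with hG
  have h1 : ∏ i : Fin N, F i = ∏ i ∈ Finset.range N, G i := by
    rw [← Fin.prod_univ_eq_prod_range]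
    exact Finset.prod_congr rfl fun i _ => by simp [hG, i.isLt]
  have h2 : ∏ k : Fin m, F (Fin.castLE h k) = ∏ i ∈ Finset.range m, G i := by
    rw [← Fin.prod_univ_eq_prod_range]
    refine Finset.prod_congr rfl fun k _ => ?_
    have hk : (k : ℕ) < N := lt_of_lt_of_le k.isLt h
    simp only [hG, dif_pos hk]
    rfl
  rw [h1, h2]
  exact (Finset.prod_subset (Finset.range_subset_range.mpr h) (fun i hiN him => by
    have h3 : i < N := Finset.mem_range.mp hiN
    have h4 : m ≤ i := by simpa using fun hh => him (Finset.mem_range.mpr hh)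
    simp [hG, dif_pos h3, hF ⟨i, h3⟩ h4])).symm

lemma pad (b : ℕ → ℝ) {N m : ℕ} (h : m ≤ N) :
    ∑ y ∈ Qset N m, Tb b N y = Cb b m := by
  classical
  rw [Cb]
  refine Finset.sum_nbij' (fun (y : Fin N → ℕ) => fun k : Fin m => y (Fin.castLE h k))
    (fun (z : Fin m → ℕ) => fun k : Fin N => if hk : (k : ℕ) < m then z ⟨(k : ℕ), hk⟩ else 0)
    ?_ ?_ ?_ ?_ ?_
  · intro y hy
    rw [mem_Qset_iff le_rfl]
    have h0 := sum_trunc h (fun i => ((i : ℕ) + 1) * y i)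
      (fun i hi => by simp [Qset_vanish hy i hi])
    simp only [Fin.coe_castLE] at h0
    show ∑ i : Fin m, ((i : ℕ) + 1) * y (Fin.castLE h i) = m
    rw [← h0]
    exact Qset_weight hy
  · intro z hz
    rw [mem_Qset_iff h]
    have h0 := sum_trunc h (fun i : Fin N => ((i : ℕ) + 1) *
        (if hk : (i : ℕ) < m then z ⟨(i : ℕ), hk⟩ else 0))
      (fun i hi => by simp [not_lt.mpr hi])
    simp only [Fin.coe_castLE] at h0
    show (∑ i : Fin N, ((i : ℕ) + 1) * (if hk : (i : ℕ) < m then z ⟨(i : ℕ), hk⟩ else 0)) = m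
    rw [h0]
    have h1 : ∀ x : Fin m, (if h1 : (x : ℕ) < m then z ⟨(x : ℕ), h1⟩ else 0) = z x :=
      fun x => by rw [dif_pos x.isLt]
    simp only [h1]
    exact Qset_weight hz
  · intro y hy
    funext k
    by_cases hk : (k : ℕ) < m
    · simp only [dif_pos hk]
      exact congrArg y (Fin.ext rfl)
    · simp only [dif_neg hk]
      exact (Qset_vanish hy k (not_lt.mp hk)).symm
  · intro z hz
    funext k
    have hk : ((Fin.castLE h k : Fin N) : ℕ) < m := k.isLt
    simp only [dif_pos hk]
    exact congrArg z (Fin.ext rfl)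
  · intro y hy
    have h1 : ∑ i : Fin N, y i = ∑ k : Fin m, y (Fin.castLE h k) :=
      sum_trunc h y (fun i hi => Qset_vanish hy i hi)
    have h2 : (∏ i : Fin N, ((y i).factorial : ℝ)) =
        ∏ k : Fin m, ((y (Fin.castLE h k)).factorial : ℝ) :=
      prod_trunc h _ (fun i hi => by simp [Qset_vanish hy i hi])
    have h3 : (∏ i : Fin N, b ((i : ℕ) + 1) ^ (y i)) =
        ∏ k : Fin m, b (((Fin.castLE h k : Fin N) : ℕ) + 1) ^ (y (Fin.castLE h k)) :=
      prod_trunc h _ (fun i hi => by simp [Qset_vanish hy i hi])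
    rw [Tb, Tb, mult_cast, mult_cast, h1, h2, h3]
    simp [Fin.coe_castLE]

section
variable (b : ℕ → ℝ)

noncomputable def gfun (ℓ : ℕ) (jf : Fin ℓ) (z : Fin ℓ → ℕ) : ℝ :=
  -((z jf : ℝ)) * ((((∑ i : Fin ℓ, z i) - 1).factorial : ℕ) : ℝ) /
      (∏ i : Fin ℓ, ((z i).factorial : ℝ)) *
    (-1) ^ (∑ i : Fin ℓ, z i) / b 0 ^ (∑ i : Fin ℓ, z i) *
    ∏ i : Fin ℓ, b ((i : ℕ) + 1) ^ z i

@[to_additive]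
lemma prod_update_erase {M : Type*} [CommMonoid M] {ℓ : ℕ} (y : Fin ℓ → ℕ) (j : Fin ℓ)
    (a : ℕ) (H : Fin ℓ → ℕ → M) :
    ∏ i, H i (Function.update y j a i) = H j a * ∏ i ∈ Finset.univ.erase j, H i (y i) := by
  have hfun : (fun i => H i (Function.update y j a i)) =
      Function.update (fun i => H i (y i)) j (H j a) := by
    funext i
    rcases eq_or_ne i j with rfl | hne
    · simp
    · simp [Function.update_of_ne hne]
  rw [hfun, Finset.prod_update_of_mem (Finset.mem_univ j), Finset.sdiff_singleton_eq_erase]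

@[to_additive sum_eq_mul_erase]
lemma prod_eq_mul_erase {M : Type*} [CommMonoid M] {ℓ : ℕ} (j : Fin ℓ) (F : Fin ℓ → M) :
    ∏ i, F i = F j * ∏ i ∈ Finset.univ.erase j, F i :=
  (Finset.mul_prod_erase Finset.univ F (Finset.mem_univ j)).symm

lemma key1 (hb : b 0 ≠ 0) (ℓ : ℕ) (jf : Fin ℓ) :
    b ((jf : ℕ) + 1) * Cb b (ℓ - ((jf : ℕ) + 1)) = ∑ z ∈ Qset ℓ ℓ, gfun b ℓ jf z := by
  classical
  set m := ℓ - ((jf : ℕ) + 1) with hm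
  have hmle : m ≤ ℓ := Nat.sub_le _ _
  have hmeq : m + ((jf : ℕ) + 1) = ℓ := by have := jf.isLt; omega
  rw [← pad b hmle, Finset.mul_sum]
  rw [show (∑ z ∈ Qset ℓ ℓ, gfun b ℓ jf z)
      = ∑ z ∈ (Qset ℓ ℓ).filter (fun z => z jf ≠ 0), gfun b ℓ jf z from
    (Finset.sum_filter_of_ne (fun z _ hz => by
      intro h0
      apply hz
      simp [gfun, h0])).symm]
  refine Finset.sum_nbij' (fun y => Function.update y jf (y jf + 1))
    (fun z => Function.update z jf (z jf - 1)) ?_ ?_ ?_ ?_ ?_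
  · intro y hy
    rw [Finset.mem_filter]
    constructor
    · rw [mem_Qset_iff le_rfl]
      have h1 : ∑ i : Fin ℓ, ((i : ℕ) + 1) * Function.update y jf (y jf + 1) i
          = ((jf : ℕ) + 1) * (y jf + 1) + ∑ i ∈ Finset.univ.erase jf, ((i : ℕ) + 1) * y i := by
        simpa using sum_update_erase y jf (y jf + 1) (fun i t => ((i : ℕ) + 1) * t)
      have h3 : ((jf : ℕ) + 1) * y jf + ∑ i ∈ Finset.univ.erase jf, ((i : ℕ) + 1) * y i = m := by
        have h2 : ∑ i : Fin ℓ, ((i : ℕ) + 1) * y i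
            = ((jf : ℕ) + 1) * y jf + ∑ i ∈ Finset.univ.erase jf, ((i : ℕ) + 1) * y i := by
          simpa using sum_eq_mul_erase jf (fun i => ((i : ℕ) + 1) * y i)
        rw [← h2]
        exact Qset_weight hy
      have hmul : ((jf : ℕ) + 1) * (y jf + 1) = ((jf : ℕ) + 1) * y jf + ((jf : ℕ) + 1) := by
        ring
      rw [h1]
      omega
    · simp [Function.update_self]
  · intro z hz
    rw [Finset.mem_filter] at hz
    obtain ⟨hz1, hz2⟩ := hz
    rw [mem_Qset_iff hmle]
    have h1 : ∑ i : Fin ℓ, ((i : ℕ) + 1) * Function.update z jf (z jf - 1) i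
        = ((jf : ℕ) + 1) * (z jf - 1) + ∑ i ∈ Finset.univ.erase jf, ((i : ℕ) + 1) * z i := by
      simpa using sum_update_erase z jf (z jf - 1) (fun i t => ((i : ℕ) + 1) * t)
    have h3 : ((jf : ℕ) + 1) * z jf + ∑ i ∈ Finset.univ.erase jf, ((i : ℕ) + 1) * z i = ℓ := by
      have h2 : ∑ i : Fin ℓ, ((i : ℕ) + 1) * z i
          = ((jf : ℕ) + 1) * z jf + ∑ i ∈ Finset.univ.erase jf, ((i : ℕ) + 1) * z i := by
        simpa using sum_eq_mul_erase jf (fun i => ((i : ℕ) + 1) * z i)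
      rw [← h2]
      exact Qset_weight hz1
    have hzz : z jf - 1 + 1 = z jf := by have : z jf ≠ 0 := hz2; omega
    have hmul : ((jf : ℕ) + 1) * z jf = ((jf : ℕ) + 1) * (z jf - 1) + ((jf : ℕ) + 1) := by
      obtain ⟨k, hk⟩ : ∃ k, z jf = k + 1 := ⟨z jf - 1, by omega⟩
      rw [hk, Nat.add_sub_cancel]
      ring
    rw [h1]
    omega
  · intro y hy
    simp [Function.update_idem, Function.update_self]
  · intro z hz
    rw [Finset.mem_filter] at hz
    have : z jf - 1 + 1 = z jf := by have := hz.2; omega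
    simp [Function.update_idem, Function.update_self, this]
  · intro y hy
    have hsum := sum_update_erase y jf (y jf + 1) (fun _ t => t)
    have hsum' := sum_eq_mul_erase jf y
    have hfac := prod_update_erase y jf (y jf + 1) (fun _ t => ((t.factorial : ℝ)))
    have hfac' := prod_eq_mul_erase jf (fun i => ((y i).factorial : ℝ))
    have hpow := prod_update_erase y jf (y jf + 1) (fun i t => b ((i : ℕ) + 1) ^ t)
    have hpow' := prod_eq_mul_erase jf (fun i => b ((i : ℕ) + 1) ^ y i)
    rw [Tb, gfun, mult_cast, hsum, hfac, hpow, hsum', hfac', hpow']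
    have e1 : (y jf + 1 + ∑ i ∈ Finset.univ.erase jf, y i) - 1
        = y jf + ∑ i ∈ Finset.univ.erase jf, y i := by omega
    rw [e1]
    set S := ∑ i ∈ Finset.univ.erase jf, y i
    set P := ∏ i ∈ Finset.univ.erase jf, ((y i).factorial : ℝ) with hP
    set B := ∏ i ∈ Finset.univ.erase jf, b ((i : ℕ) + 1) ^ y i
    have hPne : P ≠ 0 := by
      rw [hP]
      positivity
    have hfne : ((y jf).factorial : ℝ) ≠ 0 := by positivity
    simp only [Function.update_self]
    rw [show y jf + 1 + S = (y jf + S) + 1 from by omega, Nat.factorial_succ (y jf)]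
    push_cast
    field_simp
    ring

lemma key2 (hb : b 0 ≠ 0) (ℓ : ℕ) (hℓ : 0 < ℓ) {z : Fin ℓ → ℕ} (hz : z ∈ Qset ℓ ℓ) :
    ∑ jf : Fin ℓ, gfun b ℓ jf z = -(b 0 * Tb b ℓ z) := by
  have hw := Qset_weight hz
  have hK : (∑ i : Fin ℓ, z i) ≠ 0 := by
    intro h0
    have hzero : ∀ i ∈ Finset.univ, z i = 0 := fun i hi =>
      (Finset.sum_eq_zero_iff.mp h0) i hi
    rw [Finset.sum_eq_zero (fun i hi => by rw [hzero i hi, mul_zero])] at hw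
    omega
  have hfac : ((∑ i : Fin ℓ, z i : ℕ) : ℝ) *
      ((((∑ i : Fin ℓ, z i) - 1).factorial : ℕ) : ℝ)
      = (((∑ i : Fin ℓ, z i).factorial : ℕ) : ℝ) := by
    exact_mod_cast congrArg (fun t : ℕ => (t : ℝ))
      (Nat.mul_factorial_pred hK)
  have hstep : ∀ jf : Fin ℓ, gfun b ℓ jf z = (z jf : ℝ) *
      (-((((∑ i : Fin ℓ, z i) - 1).factorial : ℕ) : ℝ) / (∏ i : Fin ℓ, ((z i).factorial : ℝ)) *
        (-1) ^ (∑ i : Fin ℓ, z i) / b 0 ^ (∑ i : Fin ℓ, z i) *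
        ∏ i : Fin ℓ, b ((i : ℕ) + 1) ^ z i) := by
    intro jf
    rw [gfun]
    ring
  rw [Finset.sum_congr rfl (fun jf _ => hstep jf), ← Finset.sum_mul]
  have hsum : (∑ jf : Fin ℓ, (z jf : ℝ)) = ((∑ i : Fin ℓ, z i : ℕ) : ℝ) := by
    push_cast
    rfl
  rw [hsum, Tb, mult_cast]
  have hPne : (∏ i, ((z i).factorial : ℝ)) ≠ 0 := by positivity
  rw [pow_succ]
  field_simp
  rw [← hfac]
  ring

lemma conv_id (hb : b 0 ≠ 0) (ℓ : ℕ) (hℓ : 0 < ℓ) :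
    ∑ j ∈ Finset.range (ℓ + 1), b j * Cb b (ℓ - j) = 0 := by
  rw [Finset.sum_range_succ']
  have e1 : ∑ i ∈ Finset.range ℓ, b (i + 1) * Cb b (ℓ - (i + 1))
      = ∑ jf : Fin ℓ, b ((jf : ℕ) + 1) * Cb b (ℓ - ((jf : ℕ) + 1)) :=
    (Fin.sum_univ_eq_sum_range (fun i => b (i + 1) * Cb b (ℓ - (i + 1))) ℓ).symm
  rw [e1, Finset.sum_congr rfl (fun jf _ => key1 b hb ℓ jf), Finset.sum_comm,
    Finset.sum_congr rfl (fun z hz => key2 b hb ℓ hℓ hz), Nat.sub_zero, Cb,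
    Finset.mul_sum]
  simp
end

lemma itd_const_succ : ∀ (t : ℕ) (c : ℝ), iteratedDeriv (t + 1) (fun _ : ℝ => c) = fun _ => (0 : ℝ) := by
  intro t
  induction t with
  | zero => intro c; rw [iteratedDeriv_succ', deriv_const', iteratedDeriv_zero]
  | succ t ih => intro c; rw [iteratedDeriv_succ', deriv_const', ih 0]

lemma Cb_zero (b : ℕ → ℝ) : Cb b 0 = 1 / b 0 := by
  rw [Cb]
  have h1 : Qset 0 0 = {(finZeroElim : Fin 0 → ℕ)} := by
    apply Finset.eq_singleton_iff_unique_mem.mpr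
    constructor
    · refine Finset.mem_filter.mpr ⟨Fintype.mem_piFinset.mpr fun i => i.elim0, by simp⟩
    · intro y _
      funext i
      exact i.elim0
  rw [h1, Finset.sum_singleton, Tb]
  simp [Nat.multinomial]

lemma inv_val (n : ℕ) (x₀ : ℝ) (v : ℝ → ℝ)
    (hv : ∀ i < n, ∀ᶠ x in nhds x₀, DifferentiableAt ℝ (iteratedDeriv i v) x)
    (hvne : ∀ᶠ x in nhds x₀, v x ≠ 0) :
    ∀ ℓ, ℓ ≤ n → iteratedDeriv ℓ (fun x => (v x)⁻¹) x₀ =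
      (ℓ.factorial : ℝ) * Cb (fun j => iteratedDeriv j v x₀ / (j.factorial : ℝ)) ℓ := by
  have hvx : v x₀ ≠ 0 := hvne.self_of_nhds
  set b : ℕ → ℝ := fun j => iteratedDeriv j v x₀ / (j.factorial : ℝ) with hbdef
  have hb0 : b 0 = v x₀ := by simp [hbdef, iteratedDeriv_zero]
  have hb : b 0 ≠ 0 := by rw [hb0]; exact hvx
  intro ℓ
  induction ℓ using Nat.strong_induction_on with
  | _ ℓ IH =>
    intro hℓn
    rcases ℓ with _ | t
    · rw [show iteratedDeriv 0 (fun x => (v x)⁻¹) x₀ = (v x₀)⁻¹ from by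
        rw [iteratedDeriv_zero]]
      rw [Cb_zero, hb0]
      simp
    · have hinv := evd_inv x₀ v hvne n hv
      have L0 := (leibniz_ev x₀ (t + 1) v (fun x => (v x)⁻¹)
        (fun i hi => hv i (lt_of_lt_of_le hi hℓn))
        (fun i hi => hinv i (lt_of_lt_of_le hi hℓn))).self_of_nhds
      have hone : (fun y => v y * (v y)⁻¹) =ᶠ[nhds x₀] fun _ => (1 : ℝ) := by
        filter_upwards [hvne] with x hx using mul_inv_cancel₀ hx
      have hz : iteratedDeriv (t + 1) (fun y => v y * (v y)⁻¹) x₀ = 0 :=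
        (hone.iteratedDeriv_eq (t + 1)).trans (by rw [itd_const_succ t 1])
      rw [hz, Finset.sum_range_succ'] at L0
      have hconv := conv_id b hb (t + 1) (Nat.succ_pos t)
      rw [Finset.sum_range_succ'] at hconv
      simp only [Nat.sub_zero] at hconv
      have hterm : ∀ i ∈ Finset.range (t + 1),
          ((t + 1).choose (i + 1) : ℝ) * (iteratedDeriv (i + 1) v x₀ *
            iteratedDeriv (t + 1 - (i + 1)) (fun x => (v x)⁻¹) x₀)
          = ((t + 1).factorial : ℝ) * (b (i + 1) * Cb b (t + 1 - (i + 1))) := by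
        intro i hi
        have hi' : i < t + 1 := Finset.mem_range.mp hi
        have h1 : t + 1 - (i + 1) = t - i := by omega
        rw [h1, IH (t - i) (by omega) (by omega)]
        have h2 : ((t + 1).choose (i + 1)) * ((i + 1).factorial) * ((t - i).factorial)
            = (t + 1).factorial := by
          have h3 := Nat.choose_mul_factorial_mul_factorial
            (Nat.succ_le_succ (Nat.lt_succ_iff.mp hi'))
          rwa [show t + 1 - (i + 1) = t - i from by omega] at h3
        have h2' : (((t + 1).choose (i + 1) : ℕ) : ℝ) * (((i + 1).factorial : ℕ) : ℝ) *
            (((t - i).factorial : ℕ) : ℝ) = (((t + 1).factorial : ℕ) : ℝ) := by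
          exact_mod_cast congrArg (fun k : ℕ => (k : ℝ)) h2
        rw [hbdef]
        have hfacne : (((i + 1).factorial : ℕ) : ℝ) ≠ 0 := by positivity
        field_simp
        linear_combination (iteratedDeriv (i + 1) v x₀ * Cb b (t - i)) * h2'
      rw [Finset.sum_congr rfl hterm, ← Finset.mul_sum] at L0
      have hS : ∑ i ∈ Finset.range (t + 1), b (i + 1) * Cb b (t + 1 - (i + 1))
          = -(b 0 * Cb b (t + 1)) := by linarith [hconv]
      rw [hS] at L0
      simp only [Nat.choose_zero_right, Nat.cast_one, one_mul, Nat.sub_zero,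
        iteratedDeriv_zero, hb0] at L0
      apply mul_left_cancel₀ hvx
      linarith [L0]

theorem quotient_rule (n : ℕ) (x₀ : ℝ) (u v : ℝ → ℝ)
    (hu : ∀ i < n, ∀ᶠ x in nhds x₀, DifferentiableAt ℝ (iteratedDeriv i u) x)
    (hv : ∀ i < n, ∀ᶠ x in nhds x₀, DifferentiableAt ℝ (iteratedDeriv i v) x)
    (hvne : ∀ᶠ x in nhds x₀, v x ≠ 0) :
    iteratedDeriv n (fun x => u x / v x) x₀ =
      (n.factorial : ℝ) *
        ∑ ℓ ∈ Finset.range (n + 1),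
          (iteratedDeriv (n - ℓ) u x₀ / ((n - ℓ).factorial : ℝ)) *
            ∑ y ∈ (Fintype.piFinset fun _ : Fin ℓ => Finset.range (ℓ + 1)).filter
                (fun y => ∑ i : Fin ℓ, ((i : ℕ) + 1) * y i = ℓ),
              (Nat.multinomial Finset.univ y : ℝ) * (-1) ^ (∑ i, y i) /
                  (v x₀) ^ ((∑ i, y i) + 1) *
                ∏ i : Fin ℓ,
                  (iteratedDeriv ((i : ℕ) + 1) v x₀ / (((i : ℕ) + 1).factorial : ℝ)) ^ y i := by
  have hvx : v x₀ ≠ 0 := hvne.self_of_nhds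
  set b : ℕ → ℝ := fun j => iteratedDeriv j v x₀ / (j.factorial : ℝ) with hbdef
  have hb0 : b 0 = v x₀ := by simp [hbdef, iteratedDeriv_zero]
  have hCb : ∀ ℓ : ℕ,
      (∑ y ∈ (Fintype.piFinset fun _ : Fin ℓ => Finset.range (ℓ + 1)).filter
          (fun y => ∑ i : Fin ℓ, ((i : ℕ) + 1) * y i = ℓ),
        (Nat.multinomial Finset.univ y : ℝ) * (-1) ^ (∑ i, y i) /
            (v x₀) ^ ((∑ i, y i) + 1) *
          ∏ i : Fin ℓ,
            (iteratedDeriv ((i : ℕ) + 1) v x₀ / (((i : ℕ) + 1).factorial : ℝ)) ^ y i)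
      = Cb b ℓ := by
    intro ℓ
    rw [Cb]
    apply Finset.sum_congr rfl
    intro y _
    rw [Tb, hb0]
  have hdiv : (fun x => u x / v x) = fun x => u x * (v x)⁻¹ := by
    funext x
    rw [div_eq_mul_inv]
  rw [hdiv]
  have hinv := evd_inv x₀ v hvne n hv
  have L := (leibniz_ev x₀ n u (fun x => (v x)⁻¹) hu hinv).self_of_nhds
  rw [L, ← Finset.sum_range_reflect, Finset.mul_sum]
  apply Finset.sum_congr rfl
  intro ℓ hℓ
  have hℓn : ℓ ≤ n := Nat.lt_succ_iff.mp (Finset.mem_range.mp hℓ)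
  simp only [Nat.add_sub_cancel]
  rw [Nat.choose_symm hℓn, show n - (n - ℓ) = ℓ from by omega,
    inv_val n x₀ v hv hvne ℓ hℓn, hCb ℓ]
  have h2 : (n.choose ℓ) * (ℓ.factorial) * ((n - ℓ).factorial) = n.factorial :=
    Nat.choose_mul_factorial_mul_factorial hℓn
  have h2' : ((n.choose ℓ : ℕ) : ℝ) * ((ℓ.factorial : ℕ) : ℝ) *
      (((n - ℓ).factorial : ℕ) : ℝ) = ((n.factorial : ℕ) : ℝ) := by
    exact_mod_cast congrArg (fun k : ℕ => (k : ℝ)) h2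
  have hfacne : (((n - ℓ).factorial : ℕ) : ℝ) ≠ 0 := by positivity
  field_simp
  linear_combination (iteratedDeriv (n - ℓ) u x₀ * Cb b ℓ) * h2'
end

section
/- For every natural number n, the sum over all tuples (y₁, …, yₙ) of nonnegative integers satisfying Σᵢ₌₁ⁿ i·yᵢ = n of ( (Σᵢ yᵢ)! / (y₁! ⋯ yₙ!) ) · (−1)^{Σᵢ yᵢ} · Πᵢ₌₁ⁿ (1/i!)^{yᵢ}, computed in ℚ, equals (−1)ⁿ / n!. -/
open Finset

namespace PartitionMultinomialAux

open PowerSeries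

noncomputable def f (n : ℕ) : ℚ⟦X⟧ :=
  ∑ i : Fin n, C (R := ℚ) (1 / ((((i : ℕ) + 1).factorial : ℚ))) * X ^ ((i : ℕ) + 1)

lemma coeff_f (n m : ℕ) (hm : m ≤ n) :
    (coeff (R := ℚ) m) (f n) = (coeff (R := ℚ) m) (exp ℚ - 1) := by
  rw [f, map_sum, map_sub]
  simp only [coeff_C_mul, coeff_X_pow, coeff_exp]
  cases m with
  | zero => simp [PowerSeries.coeff_zero_eq_constantCoeff]
  | succ j =>
      rw [Finset.sum_eq_single (⟨j, hm⟩ : Fin n)]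
      · simp [PowerSeries.coeff_one]
      · intro i _ hi
        have hne : ¬ (j + 1 = (i : ℕ) + 1) := fun hc => hi (Fin.ext (by simp; omega))
        rw [if_neg hne, mul_zero]
      · simp

lemma coeff_f_pow_eq (n k : ℕ) :
    (coeff (R := ℚ) n) ((f n) ^ k) = (coeff (R := ℚ) n) ((exp ℚ - 1) ^ k) := by
  rw [coeff_pow, coeff_pow]
  refine Finset.sum_congr rfl fun l hl => Finset.prod_congr rfl fun i hi => ?_
  rw [Finset.mem_finsuppAntidiag] at hl
  refine coeff_f n (l i) ?_
  calc l i ≤ ∑ j ∈ Finset.range k, l j :=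
        Finset.single_le_sum (fun j _ => Nat.zero_le _) hi
    _ = n := hl.1

lemma analytic (n : ℕ) :
    ∑ k ∈ Finset.range (n + 1), (coeff (R := ℚ) n) ((1 - exp ℚ) ^ k) =
      (-1) ^ n / (n.factorial : ℚ) := by
  have hmul : (∑ k ∈ Finset.range (n + 1), (1 - exp ℚ) ^ k) * exp ℚ =
      1 - (1 - exp ℚ) ^ (n + 1) := by
    have h := geom_sum_mul (1 - exp ℚ) (n + 1)
    have h2 : (1 - exp ℚ) - 1 = -(exp ℚ) := by ring
    rw [h2] at h
    have := congrArg Neg.neg h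
    rw [neg_sub] at this
    rw [← this]
    ring
  have hkey : (∑ k ∈ Finset.range (n + 1), (1 - exp ℚ) ^ k) =
      evalNegHom (exp ℚ) - (1 - exp ℚ) ^ (n + 1) * evalNegHom (exp ℚ) := by
    have h1 : exp ℚ * evalNegHom (exp ℚ) = 1 := exp_mul_exp_neg_eq_one
    calc (∑ k ∈ Finset.range (n + 1), (1 - exp ℚ) ^ k)
        = (∑ k ∈ Finset.range (n + 1), (1 - exp ℚ) ^ k) * (exp ℚ * evalNegHom (exp ℚ)) := by
          rw [h1, mul_one]
      _ = ((∑ k ∈ Finset.range (n + 1), (1 - exp ℚ) ^ k) * exp ℚ) * evalNegHom (exp ℚ) := by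
          ring
      _ = (1 - (1 - exp ℚ) ^ (n + 1)) * evalNegHom (exp ℚ) := by rw [hmul]
      _ = evalNegHom (exp ℚ) - (1 - exp ℚ) ^ (n + 1) * evalNegHom (exp ℚ) := by ring
  have hzero : (coeff (R := ℚ) n) ((1 - exp ℚ) ^ (n + 1) * evalNegHom (exp ℚ)) = 0 := by
    have hX : (X : ℚ⟦X⟧) ∣ (1 - exp ℚ) := by
      rw [PowerSeries.X_dvd_iff]
      simp [constantCoeff_exp]
    have hdvd : (X : ℚ⟦X⟧) ^ (n + 1) ∣ (1 - exp ℚ) ^ (n + 1) * evalNegHom (exp ℚ) :=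
      Dvd.dvd.mul_right (pow_dvd_pow_of_dvd hX (n + 1)) _
    exact (PowerSeries.X_pow_dvd_iff.mp hdvd) n (Nat.lt_succ_self n)
  rw [← map_sum, hkey, map_sub, hzero, sub_zero]
  show (coeff (R := ℚ) n) (rescale (-1 : ℚ) (exp ℚ)) = _
  rw [coeff_rescale, coeff_exp]
  simp [div_eq_mul_inv]

lemma coeff_f_pow (n k : ℕ) :
    (coeff (R := ℚ) n) ((f n) ^ k) =
      ∑ y ∈ (piAntidiag (Finset.univ : Finset (Fin n)) k).filter
          (fun y => ∑ i : Fin n, ((i : ℕ) + 1) * y i = n),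
        (Nat.multinomial Finset.univ y : ℚ) *
          ∏ i : Fin n, (1 / ((((i : ℕ) + 1).factorial : ℚ))) ^ y i := by
  rw [f, Finset.sum_pow_eq_sum_piAntidiag, map_sum, Finset.sum_filter]
  refine Finset.sum_congr rfl fun y _ => ?_
  have hprod : ∏ i : Fin n, (C (R := ℚ) (1 / ((((i : ℕ) + 1).factorial : ℚ))) * X ^ ((i : ℕ) + 1)) ^ y i
      = C (R := ℚ) (∏ i : Fin n, (1 / ((((i : ℕ) + 1).factorial : ℚ))) ^ y i) *
          X ^ (∑ i : Fin n, ((i : ℕ) + 1) * y i) := by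
    rw [map_prod, ← Finset.prod_pow_eq_pow_sum, ← Finset.prod_mul_distrib]
    refine Finset.prod_congr rfl fun i _ => ?_
    rw [mul_pow, map_pow, pow_mul]
  have hcast : ((Nat.multinomial Finset.univ y : ℕ) : ℚ⟦X⟧) =
      C (R := ℚ) ((Nat.multinomial Finset.univ y : ℕ) : ℚ) := by
    rw [map_natCast]
  rw [hprod, hcast, ← mul_assoc, ← map_mul, coeff_C_mul, coeff_X_pow]
  by_cases h : ∑ i : Fin n, ((i : ℕ) + 1) * y i = n
  · rw [if_pos h, if_pos h.symm, mul_one]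
  · rw [if_neg h, if_neg (fun hc => h hc.symm), mul_zero]

end PartitionMultinomialAux

theorem partition_multinomial_inv_factorial_sum (n : ℕ) :
    ∑ y ∈ (Fintype.piFinset fun _ : Fin n => Finset.range (n + 1)).filter
        (fun y => ∑ i : Fin n, ((i : ℕ) + 1) * y i = n),
      (Nat.multinomial Finset.univ y : ℚ) * (-1) ^ (∑ i, y i) *
        ∏ i : Fin n, (1 / ((((i : ℕ) + 1).factorial : ℚ))) ^ y i =
      (-1) ^ n / (n.factorial : ℚ) := by
  classical
  open PartitionMultinomialAux PowerSeries in
  set B : ℕ → Finset (Fin n → ℕ) := fun k =>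
    (piAntidiag (Finset.univ : Finset (Fin n)) k).filter
      (fun y => ∑ i : Fin n, ((i : ℕ) + 1) * y i = n) with hB
  have hset : (Fintype.piFinset fun _ : Fin n => Finset.range (n + 1)).filter
      (fun y => ∑ i : Fin n, ((i : ℕ) + 1) * y i = n) =
      (Finset.range (n + 1)).biUnion B := by
    ext y
    rw [Finset.mem_filter, Finset.mem_biUnion, Fintype.mem_piFinset]
    constructor
    · rintro ⟨-, hdeg⟩
      have hle : ∑ i : Fin n, y i ≤ ∑ i : Fin n, ((i : ℕ) + 1) * y i :=
        Finset.sum_le_sum fun i _ => Nat.le_mul_of_pos_left (y i) (Nat.succ_pos _)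
      refine ⟨∑ i : Fin n, y i, Finset.mem_range.mpr (by omega), ?_⟩
      rw [hB, Finset.mem_filter, mem_piAntidiag]
      exact ⟨⟨rfl, fun i _ => Finset.mem_univ i⟩, hdeg⟩
    · rintro ⟨k, hk, hmem⟩
      rw [hB, Finset.mem_filter, mem_piAntidiag] at hmem
      obtain ⟨⟨hsum, -⟩, hdeg⟩ := hmem
      refine ⟨fun i => Finset.mem_range.mpr ?_, hdeg⟩
      have h1 : ((i : ℕ) + 1) * y i ≤ ∑ j : Fin n, ((j : ℕ) + 1) * y j :=
        Finset.single_le_sum (f := fun j : Fin n => ((j : ℕ) + 1) * y j)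
          (fun j _ => Nat.zero_le _) (Finset.mem_univ i)
      have h2 : y i ≤ ((i : ℕ) + 1) * y i := Nat.le_mul_of_pos_left (y i) (Nat.succ_pos _)
      omega
  have hdisj : (↑(Finset.range (n + 1)) : Set ℕ).PairwiseDisjoint B := by
    intro k _ k' _ hne
    refine Finset.disjoint_left.mpr fun y h1 h2 => hne ?_
    rw [hB] at h1 h2
    simp only [Finset.mem_filter, mem_piAntidiag] at h1 h2
    rw [← h1.1.1, ← h2.1.1]
  rw [hset, Finset.sum_biUnion hdisj]
  have hterm : ∀ k ∈ Finset.range (n + 1),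
      ∑ y ∈ B k, (Nat.multinomial Finset.univ y : ℚ) * (-1) ^ (∑ i, y i) *
        ∏ i : Fin n, (1 / ((((i : ℕ) + 1).factorial : ℚ))) ^ y i =
      (coeff (R := ℚ) n) ((1 - exp ℚ) ^ k) := by
    intro k _
    have hpow : (1 - exp ℚ) ^ k = (-1 : ℚ⟦X⟧) ^ k * (exp ℚ - 1) ^ k := by
      rw [← neg_pow, neg_sub]
    rw [hpow]
    have hneg : (coeff (R := ℚ) n) ((-1 : ℚ⟦X⟧) ^ k * (exp ℚ - 1) ^ k) =
        (-1 : ℚ) ^ k * (coeff (R := ℚ) n) ((exp ℚ - 1) ^ k) := by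
      rcases Nat.even_or_odd k with he | ho
      · rw [he.neg_one_pow, he.neg_one_pow, one_mul, one_mul]
      · rw [ho.neg_one_pow, ho.neg_one_pow, neg_one_mul, neg_one_mul, map_neg]
    rw [hneg, ← coeff_f_pow_eq, coeff_f_pow]
    rw [Finset.mul_sum, hB]
    refine Finset.sum_congr rfl fun y hy => ?_
    simp only [Finset.mem_filter, mem_piAntidiag] at hy
    rw [← hy.1.1]
    ring
  rw [Finset.sum_congr rfl hterm]
  exact PartitionMultinomialAux.analytic n
end

section
/- For every natural number n and every positive integer m, the sum over all tuples (y₁, …, yₙ) of nonnegative integers satisfying Σᵢ₌₁ⁿ i·yᵢ = n of ( (Σᵢ yᵢ)! / (y₁! ⋯ yₙ!) ) · (−1)^{Σᵢ yᵢ} · Πᵢ₌₁ⁿ (binom(m, i))^{yᵢ}, computed in ℤ, equals (−1)ⁿ · binom(n + m − 1, m − 1). -/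
open Finset
open PowerSeries


theorem aux_coeff (m j : ℕ) : (PowerSeries.coeff (R := ℤ) j) ((1 + PowerSeries.X) ^ m) = m.choose j := by
  rw [add_comm, add_pow]
  simp only [one_pow, mul_one, map_sum, ← map_natCast ((PowerSeries.C (R := ℤ))), coeff_mul_C,
    PowerSeries.coeff_X_pow, ite_mul, one_mul, zero_mul]
  rw [Finset.sum_ite_eq (range (m+1)) j]
  by_cases h : j ∈ range (m+1)
  · simp [h]
  · simp only [h, if_false]
    rw [Nat.choose_eq_zero_of_lt (by simpa using h)]
    simp

theorem aux_main (n m : ℕ) (hm : 1 ≤ m) :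
    ∑ k ∈ Finset.range (n+1), (-1 : ℤ)^k *
      (coeff (R := ℤ) n) ((∑ i : Fin n, (PowerSeries.C (R := ℤ)) (m.choose ((i:ℕ)+1) : ℤ) * X ^ ((i:ℕ)+1)) ^ k) =
    (-1) ^ n * ((m - 1 + n).choose (m - 1) : ℤ) := by
  obtain ⟨B, hB, hBc⟩ : ∃ B : PowerSeries ℤ, (1 + X) ^ m * B = 1 ∧
      ∀ j, coeff (R := ℤ) j B = (-1) ^ j * ((m - 1 + j).choose (m - 1) : ℤ) := by
    refine ⟨rescale (-1) ((invOneSubPow ℤ m).val), ?_, ?_⟩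
    · have h1 : ((1 : PowerSeries ℤ) - X) ^ m * (invOneSubPow ℤ m).val = 1 := by
        have := (invOneSubPow ℤ m).inv_val
        rwa [invOneSubPow_inv_eq_one_sub_pow] at this
      have h2 := congrArg (rescale (-1 : ℤ)) h1
      rw [map_mul, map_pow, map_one, map_sub, map_one, rescale_X] at h2
      simpa [sub_neg_eq_add] using h2
    · intro j
      rw [invOneSubPow_val_eq_mk_sub_one_add_choose_of_pos (S := ℤ) (d := m) hm,
        rescale_mk, coeff_mk]
  set P : PowerSeries ℤ := ∑ i : Fin n, (PowerSeries.C (R := ℤ)) (m.choose ((i:ℕ)+1) : ℤ) * X ^ ((i:ℕ)+1)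
    with hP
  set S : PowerSeries ℤ := ∑ k ∈ range (n+1), (-P)^k with hS
  have hXP : (X : PowerSeries ℤ) ∣ P :=
    Finset.dvd_sum fun i _ => Dvd.dvd.mul_left (dvd_pow_self X (Nat.succ_ne_zero _)) _
  have hcoeffP : ∀ j, coeff (R := ℤ) j P =
      ∑ i ∈ range n, (if j = i+1 then (m.choose (i+1) : ℤ) else 0) := by
    intro j
    rw [hP, map_sum, Fin.sum_univ_eq_sum_range (fun i => (coeff (R := ℤ) j)
      ((PowerSeries.C (R := ℤ)) (m.choose (i+1) : ℤ) * X ^ (i+1)))]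
    refine Finset.sum_congr rfl fun i _ => ?_
    rw [coeff_C_mul, PowerSeries.coeff_X_pow, mul_ite, mul_one, mul_zero]
  have hdiv1 : (X : PowerSeries ℤ)^(n+1) ∣ ((1+X)^m - (1+P)) := by
    rw [X_pow_dvd_iff]
    intro j hj
    rw [map_sub, aux_coeff, sub_eq_zero, map_add, hcoeffP]
    cases j with
    | zero => simp
    | succ j' =>
      have hj' : j' ∈ range n := by rw [mem_range]; omega
      simp only [Nat.add_right_cancel_iff]
      rw [Finset.sum_ite_eq (range n) j', if_pos hj']
      simp
  have hgeom : (1 + P) * S = 1 - (-P)^(n+1) := by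
    have h := geom_sum_mul (-P) (n+1)
    rw [hS]
    linear_combination -h
  have key : S = B - B*(-P)^(n+1) + B * (((1+X)^m - (1+P)) * S) := by
    have h1 : (1+X)^m * S = (1 - (-P)^(n+1)) + ((1+X)^m - (1+P)) * S := by
      rw [← hgeom]; ring
    calc S = (B * ((1+X)^m)) * S := by rw [mul_comm B, hB, one_mul]
      _ = B * ((1+X)^m * S) := by ring
      _ = _ := by rw [h1]; ring
  have hz1 : coeff (R := ℤ) n (B * (-P)^(n+1)) = 0 := by
    refine X_pow_dvd_iff.mp (Dvd.dvd.mul_left ?_ B) n (Nat.lt_succ_self n)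
    exact pow_dvd_pow_of_dvd ((dvd_neg).mpr hXP) (n+1)
  have hz2 : coeff (R := ℤ) n (B * (((1+X)^m - (1+P)) * S)) = 0 := by
    refine X_pow_dvd_iff.mp (Dvd.dvd.mul_left (Dvd.dvd.mul_right hdiv1 S) B) n (Nat.lt_succ_self n)
  have hcoeffS : coeff (R := ℤ) n S = (-1) ^ n * ((m - 1 + n).choose (m - 1) : ℤ) := by
    rw [key, map_add, map_sub, hz1, hz2, sub_zero, add_zero, hBc]
  rw [← hcoeffS, hS, map_sum]
  refine Finset.sum_congr rfl fun k _ => ?_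
  rw [show ((-P)^k) = (PowerSeries.C (R := ℤ)) ((-1)^k) * P^k by
      rw [map_pow, map_neg, map_one, ← neg_one_mul, mul_pow], coeff_C_mul]


theorem aux_coeff_pow (n m k : ℕ) :
    (coeff (R := ℤ) n) ((∑ i : Fin n, (PowerSeries.C (R := ℤ)) (m.choose ((i:ℕ)+1) : ℤ) * X ^ ((i:ℕ)+1)) ^ k) =
    ∑ y ∈ (Finset.piAntidiag Finset.univ k).filter
        (fun y : Fin n → ℕ => ∑ i : Fin n, ((i:ℕ)+1) * y i = n),
      (Nat.multinomial Finset.univ y : ℤ) * ∏ i : Fin n, ((m.choose ((i:ℕ)+1) : ℤ)) ^ y i := by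
  rw [Finset.sum_pow_eq_sum_piAntidiag, map_sum, Finset.sum_filter]
  refine Finset.sum_congr rfl fun y hy => ?_
  simp_rw [mul_pow, Finset.prod_mul_distrib, ← map_pow ((PowerSeries.C (R := ℤ))), ← map_prod, ← pow_mul,
    Finset.prod_pow_eq_pow_sum, ← map_natCast ((PowerSeries.C (R := ℤ))) (Nat.multinomial _ y),
    ← mul_assoc, ← map_mul, coeff_C_mul, PowerSeries.coeff_X_pow]
  by_cases h : ∑ i : Fin n, ((i:ℕ)+1) * y i = n
  · simp [h]
  · simp only [h, if_false]
    rw [if_neg (fun hh => h hh.symm), mul_zero]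


theorem aux_reindex (n m : ℕ) :
    ∑ y ∈ (Fintype.piFinset fun _ : Fin n => Finset.range (n + 1)).filter
        (fun y => ∑ i : Fin n, ((i : ℕ) + 1) * y i = n),
      (Nat.multinomial Finset.univ y : ℤ) * (-1) ^ (∑ i, y i) *
        ∏ i : Fin n, ((m.choose ((i : ℕ) + 1) : ℤ)) ^ y i =
    ∑ k ∈ Finset.range (n+1), (-1 : ℤ)^k *
      ∑ y ∈ (Finset.piAntidiag (Finset.univ : Finset (Fin n)) k).filter
        (fun y : Fin n → ℕ => ∑ i : Fin n, ((i:ℕ)+1) * y i = n),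
      (Nat.multinomial Finset.univ y : ℤ) * ∏ i : Fin n, ((m.choose ((i:ℕ)+1) : ℤ)) ^ y i := by
  have hsub : ∀ y : Fin n → ℕ, (∑ i : Fin n, ((i:ℕ)+1) * y i = n) → ∑ i, y i ≤ n := by
    intro y h
    calc ∑ i, y i ≤ ∑ i : Fin n, ((i:ℕ)+1) * y i :=
          Finset.sum_le_sum fun i _ => Nat.le_mul_of_pos_left _ (Nat.succ_pos _)
      _ = n := h
  have hset : (Fintype.piFinset fun _ : Fin n => Finset.range (n + 1)).filter
        (fun y => ∑ i : Fin n, ((i : ℕ) + 1) * y i = n) =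
      (Finset.range (n+1)).biUnion (fun k =>
        (Finset.piAntidiag (Finset.univ : Finset (Fin n)) k).filter
          (fun y : Fin n → ℕ => ∑ i : Fin n, ((i:ℕ)+1) * y i = n)) := by
    ext y
    simp only [mem_filter, Fintype.mem_piFinset, mem_range, mem_biUnion, mem_piAntidiag,
      mem_univ, implies_true, and_true]
    constructor
    · rintro ⟨-, h⟩
      exact ⟨∑ i, y i, Nat.lt_succ_of_le (hsub y h), rfl, h⟩
    · rintro ⟨k, -, rfl, h⟩
      refine ⟨fun i => Nat.lt_succ_of_le ?_, h⟩
      calc y i ≤ ((i:ℕ)+1) * y i := Nat.le_mul_of_pos_left _ (Nat.succ_pos _)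
        _ ≤ ∑ j : Fin n, ((j:ℕ)+1) * y j := Finset.single_le_sum (f := fun j : Fin n => ((j:ℕ)+1) * y j) (fun j _ => Nat.zero_le _) (mem_univ i)
        _ = n := h
  have hdisj : ∀ k ∈ Finset.range (n+1), ∀ l ∈ Finset.range (n+1), k ≠ l →
      Disjoint ((Finset.piAntidiag (Finset.univ : Finset (Fin n)) k).filter
          (fun y : Fin n → ℕ => ∑ i : Fin n, ((i:ℕ)+1) * y i = n))
        ((Finset.piAntidiag (Finset.univ : Finset (Fin n)) l).filter
          (fun y : Fin n → ℕ => ∑ i : Fin n, ((i:ℕ)+1) * y i = n)) := by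
    intro k _ l _ hkl
    rw [Finset.disjoint_left]
    intro y hy hy'
    simp only [mem_filter, mem_piAntidiag] at hy hy'
    exact hkl (hy.1.1.symm.trans hy'.1.1)
  rw [hset, Finset.sum_biUnion hdisj]
  refine Finset.sum_congr rfl fun k hk => ?_
  rw [Finset.mul_sum]
  refine Finset.sum_congr rfl fun y hy => ?_
  simp only [mem_filter, mem_piAntidiag] at hy
  rw [hy.1.1]
  ring

theorem partition_multinomial_choose_sum (n m : ℕ) (hm : 1 ≤ m) :
    ∑ y ∈ (Fintype.piFinset fun _ : Fin n => Finset.range (n + 1)).filter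
        (fun y => ∑ i : Fin n, ((i : ℕ) + 1) * y i = n),
      (Nat.multinomial Finset.univ y : ℤ) * (-1) ^ (∑ i, y i) *
        ∏ i : Fin n, ((m.choose ((i : ℕ) + 1) : ℤ)) ^ y i =
      (-1) ^ n * ((n + m - 1).choose (m - 1) : ℤ) := by
  rw [aux_reindex n m]
  simp_rw [← aux_coeff_pow n m]
  rw [aux_main n m hm]
  have h : m - 1 + n = n + m - 1 := by omega
  rw [h]
end

section
/- For every positive integer n, the sum over all tuples (y₁, …, yₙ) of nonnegative integers satisfying Σᵢ₌₁ⁿ i·yᵢ = n of ( (Σᵢ yᵢ)! / (y₁! ⋯ yₙ!) ) · (−1)^{Σᵢ yᵢ} · Πᵢ₌₁ⁿ (binom(n, i))^{yᵢ}, computed in ℤ, equals (−1)ⁿ · binom(2n − 1, n − 1). -/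
open Finset

noncomputable def pf (n : ℕ) : PowerSeries ℤ :=
  ∑ i : Fin n, (PowerSeries.C (R := ℤ) ((n.choose ((i : ℕ) + 1) : ℤ))) * PowerSeries.X ^ ((i : ℕ) + 1)

lemma one_add_pf (n : ℕ) : 1 + pf n = (1 + PowerSeries.X : PowerSeries ℤ) ^ n := by
  rw [add_comm (1 : PowerSeries ℤ) PowerSeries.X, add_pow, Finset.sum_range_succ']
  simp only [pow_zero, one_mul, one_pow, Nat.choose_zero_right, Nat.cast_one, mul_one]
  rw [pf, Fin.sum_univ_eq_sum_range (fun i => (PowerSeries.C (R := ℤ) ((n.choose (i + 1) : ℤ))) * PowerSeries.X ^ (i + 1))]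
  rw [add_comm]
  congr 1
  apply Finset.sum_congr rfl
  intro i _
  rw [map_natCast (PowerSeries.C (R := ℤ))]
  ring

lemma coeff_pf_pow (n k : ℕ) : PowerSeries.coeff (R := ℤ) n ((pf n)^k) =
    ∑ y ∈ (Finset.piAntidiag (Finset.univ : Finset (Fin n)) k).filter
        (fun y => ∑ i : Fin n, ((i:ℕ)+1) * y i = n),
      (Nat.multinomial Finset.univ y : ℤ) * ∏ i : Fin n, ((n.choose ((i : ℕ) + 1) : ℤ)) ^ y i := by
  rw [pf, Finset.sum_pow_eq_sum_piAntidiag, map_sum, Finset.sum_filter]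
  apply Finset.sum_congr rfl
  intro y hy
  simp only [mul_pow, ← map_pow, ← pow_mul, Finset.prod_mul_distrib, ← map_prod,
    Finset.prod_pow_eq_pow_sum]
  rw [← map_natCast (PowerSeries.C (R := ℤ)) (Nat.multinomial Finset.univ y), ← mul_assoc, ← map_mul,
    PowerSeries.coeff_C_mul, PowerSeries.coeff_X_pow]
  by_cases h : ∑ i : Fin n, ((i:ℕ)+1) * y i = n
  · rw [if_pos h, if_pos (by rw [h]), mul_one]
  · rw [if_neg h, if_neg (fun hc => h hc.symm), mul_zero]

lemma lhs_eq (n : ℕ) :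
    (∑ y ∈ (Fintype.piFinset fun _ : Fin n => Finset.range (n + 1)).filter
        (fun y => ∑ i : Fin n, ((i : ℕ) + 1) * y i = n),
      (Nat.multinomial Finset.univ y : ℤ) * (-1) ^ (∑ i, y i) *
        ∏ i : Fin n, ((n.choose ((i : ℕ) + 1) : ℤ)) ^ y i) =
    ∑ k ∈ Finset.range (n+1), (-1:ℤ)^k * PowerSeries.coeff (R := ℤ) n ((pf n)^k) := by
  set B := (Fintype.piFinset fun _ : Fin n => Finset.range (n + 1)).filter
      (fun y => ∑ i : Fin n, ((i : ℕ) + 1) * y i = n) with hB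
  have hmap : ∀ y ∈ B, (∑ i, y i) ∈ Finset.range (n+1) := by
    intro y hy
    rw [hB, Finset.mem_filter] at hy
    rw [Finset.mem_range, Nat.lt_succ_iff]
    exact le_trans (Finset.sum_le_sum fun i _ => Nat.le_mul_of_pos_left _ (Nat.succ_pos _))
      (le_of_eq hy.2)
  rw [← Finset.sum_fiberwise_of_maps_to hmap]
  apply Finset.sum_congr rfl
  intro k hk
  rw [coeff_pf_pow, Finset.mul_sum]
  have hset : B.filter (fun y => ∑ i, y i = k) =
      (Finset.piAntidiag (Finset.univ : Finset (Fin n)) k).filter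
        (fun y => ∑ i : Fin n, ((i:ℕ)+1) * y i = n) := by
    ext z
    simp only [hB, Finset.mem_filter, Fintype.mem_piFinset, Finset.mem_range,
      Finset.mem_piAntidiag, Finset.mem_univ, imp_true_iff, and_true, Nat.lt_succ_iff]
    constructor
    · rintro ⟨⟨h1, h2⟩, h3⟩
      tauto
    · rintro ⟨h3, h2⟩
      refine ⟨⟨fun i => ?_, h2⟩, h3⟩
      calc z i ≤ ((i:ℕ)+1) * z i := Nat.le_mul_of_pos_left _ (Nat.succ_pos _)
        _ ≤ ∑ j : Fin n, ((j:ℕ)+1) * z j := Finset.single_le_sum (f := fun j : Fin n => ((j:ℕ)+1) * z j)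
            (fun j _ => Nat.zero_le _) (Finset.mem_univ i)
        _ = n := h2
  rw [hset]
  apply Finset.sum_congr rfl
  intro y hy
  have hk' : ∑ i, y i = k := ((Finset.mem_piAntidiag.mp (Finset.mem_filter.mp hy).1).1)
  rw [hk']
  ring

lemma coeff_geom (n : ℕ) (hn : 1 ≤ n) :
    PowerSeries.coeff (R := ℤ) n (∑ k ∈ Finset.range (n+1), (-(pf n))^k) =
      (-1:ℤ)^n * ((n-1+n).choose (n-1) : ℤ) := by
  set T : PowerSeries ℤ := PowerSeries.rescale (-1) ((PowerSeries.invOneSubPow ℤ n).val) with hTdef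
  have h0 : ((1 - PowerSeries.X : PowerSeries ℤ)^n) * (PowerSeries.invOneSubPow ℤ n).val = 1 := by
    have h := (PowerSeries.invOneSubPow ℤ n).inv_val
    rwa [PowerSeries.invOneSubPow_inv_eq_one_sub_pow] at h
  have hT : (1 + PowerSeries.X : PowerSeries ℤ)^n * T = 1 := by
    have := congrArg (PowerSeries.rescale (-1 : ℤ)) h0
    rw [map_mul, map_pow, map_sub, map_one, PowerSeries.rescale_neg_one_X, sub_neg_eq_add] at this
    exact this
  set S : PowerSeries ℤ := ∑ k ∈ Finset.range (n+1), (-(pf n))^k with hSdef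
  have hgeom := geom_sum_mul (-(pf n)) (n+1)
  have hfg := one_add_pf n
  have hS : S * (1 + PowerSeries.X : PowerSeries ℤ)^n = 1 - (-(pf n))^(n+1) := by
    rw [← hfg]
    linear_combination -hgeom
  have hXdvd : PowerSeries.X ∣ pf n := by
    rw [PowerSeries.X_dvd_iff, pf, map_sum]
    apply Finset.sum_eq_zero
    intro i _
    simp [pow_succ, mul_comm]
  have key : S = (1 - (-(pf n))^(n+1)) * T := by
    calc S = S * ((1 + PowerSeries.X : PowerSeries ℤ)^n * T) := by rw [hT, mul_one]
      _ = (S * (1 + PowerSeries.X : PowerSeries ℤ)^n) * T := by ring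
      _ = (1 - (-(pf n))^(n+1)) * T := by rw [hS]
  rw [key, sub_mul, one_mul, map_sub]
  have hzero : PowerSeries.coeff (R := ℤ) n ((-(pf n))^(n+1) * T) = 0 := by
    obtain ⟨g, hg⟩ : (PowerSeries.X : PowerSeries ℤ)^(n+1) ∣ (-(pf n))^(n+1) * T :=
      Dvd.dvd.mul_right (pow_dvd_pow_of_dvd ((dvd_neg).mpr hXdvd) (n+1)) T
    rw [hg, PowerSeries.coeff_X_pow_mul']
    simp
  rw [hzero, sub_zero, hTdef, PowerSeries.coeff_rescale,
    PowerSeries.invOneSubPow_val_eq_mk_sub_one_add_choose_of_pos ℤ n hn, PowerSeries.coeff_mk]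

theorem partition_multinomial_choose_self_sum (n : ℕ) (hn : 1 ≤ n) :
    ∑ y ∈ (Fintype.piFinset fun _ : Fin n => Finset.range (n + 1)).filter
        (fun y => ∑ i : Fin n, ((i : ℕ) + 1) * y i = n),
      (Nat.multinomial Finset.univ y : ℤ) * (-1) ^ (∑ i, y i) *
        ∏ i : Fin n, ((n.choose ((i : ℕ) + 1) : ℤ)) ^ y i =
      (-1) ^ n * ((2 * n - 1).choose (n - 1) : ℤ) := by
  rw [lhs_eq]
  have h1 : ∀ k, (-1:ℤ)^k * PowerSeries.coeff (R := ℤ) n ((pf n)^k) =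
      PowerSeries.coeff (R := ℤ) n ((-(pf n))^k) := by
    intro k
    rw [show ((-(pf n))^k : PowerSeries ℤ) = PowerSeries.C (R := ℤ) ((-1:ℤ)^k) * (pf n)^k from by
      rw [neg_pow, map_pow, map_neg, map_one], PowerSeries.coeff_C_mul]
  simp_rw [h1]
  rw [← map_sum, coeff_geom n hn]
  have h2 : n - 1 + n = 2 * n - 1 := by omega
  rw [h2]
end

section
/- For every natural number n ≥ 2, the sum over all tuples (y₁, …, yₙ) of nonnegative integers satisfying Σᵢ₌₁ⁿ i·yᵢ = n of ( (Σᵢ yᵢ)! / (y₁! ⋯ yₙ!) ) · (−1)^{Σᵢ yᵢ}, computed in ℤ, equals 0; for n = 0 it equals 1 and for n = 1 it equals −1. -/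
open Finset Polynomial

lemma key_eval (n : ℕ) :
    (∑ y ∈ (Fintype.piFinset fun _ : Fin n => Finset.range (n + 1)).filter
      (fun y => ∑ i : Fin n, ((i : ℕ) + 1) * y i = n),
    (Nat.multinomial Finset.univ y : ℤ) * (-1) ^ (∑ i, y i)) =
      if n = 0 then 1 else if n = 1 then -1 else 0 := by
  classical
  set p : ℤ[X] := ∑ i : Fin n, -(X ^ ((i : ℕ) + 1)) with hp
  set G : ℤ[X] := ∑ k ∈ range (n + 1), p ^ k with hG
  have hterm : ∀ y : Fin n → ℕ,
      (Nat.multinomial Finset.univ y : ℤ[X]) *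
        ∏ i : Fin n, (-(X:ℤ[X]) ^ ((i:ℕ)+1)) ^ (y i) =
        C ((Nat.multinomial Finset.univ y : ℤ) * (-1) ^ (∑ i, y i)) *
          X ^ (∑ i : Fin n, ((i : ℕ) + 1) * y i) := by
    intro y
    have h1 : ∀ i : Fin n, (-(X:ℤ[X]) ^ ((i:ℕ)+1)) ^ (y i)
        = (-1) ^ (y i) * X ^ (((i:ℕ)+1) * y i) := by
      intro i; rw [neg_pow, ← pow_mul]
    rw [Finset.prod_congr rfl fun i _ => h1 i, Finset.prod_mul_distrib,
      Finset.prod_pow_eq_pow_sum, Finset.prod_pow_eq_pow_sum]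
    simp only [map_mul, map_pow, map_neg, map_one, Polynomial.C_eq_natCast]
    ring
  have hcoeff : ∀ k : ℕ, (p ^ k).coeff n =
      ∑ y ∈ (Finset.piAntidiag Finset.univ k).filter
        (fun y : Fin n → ℕ => ∑ i : Fin n, ((i : ℕ) + 1) * y i = n),
        (Nat.multinomial Finset.univ y : ℤ) * (-1) ^ (∑ i, y i) := by
    intro k
    rw [hp, Finset.sum_pow_eq_sum_piAntidiag, Polynomial.finset_sum_coeff, Finset.sum_filter]
    refine Finset.sum_congr rfl fun y _ => ?_
    rw [hterm y, coeff_C_mul, coeff_X_pow]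
    split_ifs with h h' h'
    · simp
    · exact absurd h.symm h'
    · exact absurd h'.symm h
    · simp
  have hsets : ∀ k ∈ range (n + 1),
      ((Fintype.piFinset fun _ : Fin n => Finset.range (n + 1)).filter
        (fun y => ∑ i : Fin n, ((i : ℕ) + 1) * y i = n)).filter
          (fun y => ∑ i, y i = k) =
      (Finset.piAntidiag Finset.univ k).filter
        (fun y : Fin n → ℕ => ∑ i : Fin n, ((i : ℕ) + 1) * y i = n) := by
    intro k _
    ext y
    simp only [Finset.mem_filter, Fintype.mem_piFinset, Finset.mem_range,
      Finset.mem_piAntidiag, ne_eq]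
    constructor
    · rintro ⟨⟨-, h1⟩, h2⟩
      exact ⟨⟨h2, fun i _ => Finset.mem_univ i⟩, h1⟩
    · rintro ⟨⟨h2, -⟩, h1⟩
      refine ⟨⟨fun i => ?_, h1⟩, h2⟩
      have hle : ((i : ℕ) + 1) * y i ≤ n := by
        have h := Finset.single_le_sum (f := fun i : Fin n => ((i : ℕ) + 1) * y i)
          (fun _ _ => Nat.zero_le _) (Finset.mem_univ i)
        rw [h1] at h
        exact h
      have : y i ≤ ((i : ℕ) + 1) * y i := Nat.le_mul_of_pos_left _ (Nat.succ_pos _)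
      omega
  have hmaps : ∀ y ∈ (Fintype.piFinset fun _ : Fin n => Finset.range (n + 1)).filter
      (fun y => ∑ i : Fin n, ((i : ℕ) + 1) * y i = n), (∑ i, y i) ∈ range (n + 1) := by
    intro y hy
    simp only [Finset.mem_filter] at hy
    have h2 := hy.2
    have h3 : (∑ i, y i) ≤ ∑ i : Fin n, ((i : ℕ) + 1) * y i :=
      Finset.sum_le_sum fun i _ => Nat.le_mul_of_pos_left _ (Nat.succ_pos _)
    rw [Finset.mem_range]
    omega
  have hS : (∑ y ∈ (Fintype.piFinset fun _ : Fin n => Finset.range (n + 1)).filter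
      (fun y => ∑ i : Fin n, ((i : ℕ) + 1) * y i = n),
      (Nat.multinomial Finset.univ y : ℤ) * (-1) ^ (∑ i, y i)) = G.coeff n := by
    rw [← Finset.sum_fiberwise_of_maps_to hmaps
      (fun y => (Nat.multinomial Finset.univ y : ℤ) * (-1) ^ (∑ i, y i)),
      hG, Polynomial.finset_sum_coeff]
    refine Finset.sum_congr rfl fun k hk => ?_
    rw [hcoeff k, ← hsets k hk]
  rw [hS]
  -- Step 2: algebra
  have hr : p = X * (∑ i : Fin n, -(X ^ (i : ℕ))) := by
    rw [hp, Finset.mul_sum]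
    refine Finset.sum_congr rfl fun i _ => ?_
    rw [mul_neg, ← pow_succ']
  have hgeom : G * (p - 1) = p ^ (n + 1) - 1 := geom_sum_mul p (n + 1)
  have h1p : (1 - p) = ∑ i ∈ range (n + 1), (X : ℤ[X]) ^ i := by
    rw [hp, Finset.sum_neg_distrib, sub_neg_eq_add,
      Fin.sum_univ_eq_sum_range (fun i => (X:ℤ[X]) ^ (i + 1)),
      Finset.sum_range_succ', pow_zero]
    ring
  have hstep : (1 - p) * G = 1 - p ^ (n + 1) := by linear_combination -hgeom
  have hkey : ((X:ℤ[X]) ^ (n + 1) - 1) * G = (X - 1) * (1 - p ^ (n + 1)) := by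
    rw [← geom_sum_mul (X : ℤ[X]) (n + 1), ← h1p]
    linear_combination (X - 1 : ℤ[X]) * hstep
  have hL : (((X:ℤ[X]) ^ (n + 1) - 1) * G).coeff n = -G.coeff n := by
    rw [sub_mul, one_mul, mul_comm ((X:ℤ[X]) ^ (n+1)) G, Polynomial.coeff_sub,
      Polynomial.coeff_mul_X_pow', if_neg (Nat.not_succ_le_self n)]
    ring
  have hR : ((X - 1 : ℤ[X]) * (1 - p ^ (n + 1))).coeff n =
      (if n = 1 then (1:ℤ) else 0) - (if n = 0 then 1 else 0) := by
    have hXp : (X - 1 : ℤ[X]) * (1 - p ^ (n + 1)) =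
        (X - 1) - ((X - 1) * (∑ i : Fin n, -(X ^ (i : ℕ))) ^ (n + 1)) * X ^ (n + 1) := by
      rw [hr]; ring
    rw [hXp, Polynomial.coeff_sub, Polynomial.coeff_mul_X_pow', if_neg (Nat.not_succ_le_self n),
      Polynomial.coeff_sub, Polynomial.coeff_X, Polynomial.coeff_one]
    simp [eq_comm]
  have hmain := hkey
  apply_fun (fun q : ℤ[X] => q.coeff n) at hmain
  rw [hL, hR] at hmain
  have hG' : G.coeff n = (if n = 0 then (1:ℤ) else 0) - (if n = 1 then 1 else 0) := by
    linarith
  rw [hG']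
  split_ifs <;> simp_all



/-- The alternating sum over partitions of `n` of multinomial coefficients. -/
def partitionAltMultinomialSum (n : ℕ) : ℤ :=
  ∑ y ∈ (Fintype.piFinset fun _ : Fin n => Finset.range (n + 1)).filter
      (fun y => ∑ i : Fin n, ((i : ℕ) + 1) * y i = n),
    (Nat.multinomial Finset.univ y : ℤ) * (-1) ^ (∑ i, y i)

theorem partition_alt_multinomial_sum (n : ℕ) :
    (2 ≤ n → partitionAltMultinomialSum n = 0) ∧
      partitionAltMultinomialSum 0 = 1 ∧ partitionAltMultinomialSum 1 = -1 := by
  have h : ∀ m : ℕ, partitionAltMultinomialSum m =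
      if m = 0 then 1 else if m = 1 then -1 else 0 := by
    intro m
    unfold partitionAltMultinomialSum
    exact key_eval m
  refine ⟨fun h2 => ?_, ?_, ?_⟩
  · rw [h n, if_neg (by omega), if_neg (by omega)]
  · rw [h 0]; rfl
  · rw [h 1]; rfl
end

section
/- Let n be a natural number, let a be a real number with a > 0, and let x₀ be a real number with x₀ > 1. Then the n-th derivative of the function x ↦ (ln a)/(ln x) at x₀ equals ((ln a)/(ln x₀)) · ((−1)ⁿ n! / x₀ⁿ) · Σ_{y} [ ( (Σᵢ yᵢ)! / (ln x₀)^{Σᵢ yᵢ} ) · Πᵢ₌₁ⁿ ( 1 / (i^{yᵢ} · yᵢ!) ) ], where the sum runs over all tuples y = (y₁, …, yₙ) of nonnegative integers satisfying Σᵢ₌₁ⁿ i·yᵢ = n. -/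
open Finset

open Finset

def itA : ℕ → ℕ → ℕ
  | 0, 0 => 1
  | 0, _+1 => 0
  | n+1, m => n * itA n m + m * itA n (m-1)

lemma itA_succ (n m : ℕ) : itA (n+1) m = n * itA n m + m * itA n (m-1) := rfl

lemma itA_zero_right (n : ℕ) : itA (n+1) 0 = 0 := by
  induction n with
  | zero => rfl
  | succ k ih => rw [itA_succ, ih]; simp

lemma itA_eq_zero_of_lt : ∀ n m, n < m → itA n m = 0 := by
  intro n
  induction n with
  | zero => intro m hm; cases m with | zero => omega | succ k => rfl
  | succ k ih =>
    intro m hm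
    rw [itA_succ, ih m (by omega)]
    cases m with
    | zero => omega
    | succ j => rw [Nat.succ_sub_one, ih j (by omega)]; simp
lemma itA_conv (m : ℕ) : ∀ n, (itA (n+1) (m+1) : ℝ) =
    (m+1) * ∑ k ∈ range (n+1), ((n.factorial : ℝ)/(k.factorial)) * itA k m := by
  intro n
  induction n with
  | zero => simp [itA_succ]
  | succ k ih =>
    have h1 : ∀ j ∈ range (k+1), (((k+1).factorial : ℝ)/(j.factorial)) * itA j m
        = (k+1) * (((k.factorial : ℝ)/(j.factorial)) * itA j m) := by
      intro j hj
      rw [Nat.factorial_succ]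
      push_cast
      ring
    have hR : ∑ j ∈ range (k+2), (((k+1).factorial : ℝ)/(j.factorial)) * itA j m
        = (k+1) * (∑ j ∈ range (k+1), ((k.factorial : ℝ)/(j.factorial)) * itA j m)
          + itA (k+1) m := by
      rw [Finset.sum_range_succ, Finset.sum_congr rfl h1, ← Finset.mul_sum,
        div_self (by positivity), one_mul]
    show _ = (m+1 : ℝ) * ∑ j ∈ range (k+2), (((k+1).factorial : ℝ)/(j.factorial)) * itA j m
    rw [hR, itA_succ]
    push_cast
    rw [ih]
    ring

noncomputable def pS (N k m : ℕ) : ℝ :=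
  ∑ y ∈ (Fintype.piFinset fun _ : Fin N => range (k+1)).filter
      (fun y => (∑ j : Fin N, ((j:ℕ)+1) * y j = k) ∧ (∑ j, y j = m)),
    ∏ j : Fin N, (1 / ((((j:ℕ)+1) ^ y j * (y j).factorial : ℕ) : ℝ))

lemma pS_zero : pS 0 0 0 = 1 := by
  simp [pS]

lemma pS_zero_succ (m : ℕ) : pS 0 0 (m+1) = 0 := by
  simp [pS]

lemma pS_parts_zero (N k : ℕ) : pS N (k+1) 0 = 0 := by
  unfold pS
  rw [Finset.sum_eq_zero]
  intro y hy
  exfalso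
  simp only [mem_filter] at hy
  obtain ⟨-, hs1, hs2⟩ := hy
  have : ∀ j : Fin N, y j = 0 :=
    fun j => (Finset.sum_eq_zero_iff.mp hs2) j (Finset.mem_univ j)
  rw [Finset.sum_eq_zero (fun j _ => by rw [this j, Nat.mul_zero])] at hs1
  omega

lemma pS_pad (N k m : ℕ) (hk : k ≤ N) : pS (N+1) k m = pS N k m := by
  classical
  have key : ∀ y : Fin (N+1) → ℕ, (∑ j : Fin (N+1), ((j:ℕ)+1) * y j = k) →
      y (Fin.last N) = 0 := by
    intro y hy
    by_contra h
    have h1 := Finset.single_le_sum (f := fun j : Fin (N+1) => ((j:ℕ)+1) * y j)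
      (fun i _ => Nat.zero_le _) (Finset.mem_univ (Fin.last N))
    rw [hy] at h1
    simp only [Fin.val_last] at h1
    have h2 : 1 ≤ y (Fin.last N) := Nat.one_le_iff_ne_zero.mpr h
    have h3 := Nat.mul_le_mul_left (N+1) h2
    omega
  unfold pS
  refine Finset.sum_nbij' (i := fun y => Fin.init y) (j := fun y => Fin.snoc y 0)
    ?_ ?_ ?_ ?_ ?_
  · intro y hy
    simp only [mem_filter, Fintype.mem_piFinset] at hy ⊢
    obtain ⟨hpi, hs1, hs2⟩ := hy
    have h0 := key y hs1
    refine ⟨fun j => hpi _, ?_, ?_⟩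
    · rw [← hs1, Fin.sum_univ_castSucc, h0]
      simp [Fin.init]
    · rw [← hs2, Fin.sum_univ_castSucc, h0]
      simp [Fin.init]
  · intro y hy
    simp only [mem_filter, Fintype.mem_piFinset] at hy ⊢
    obtain ⟨hpi, hs1, hs2⟩ := hy
    refine ⟨?_, ?_, ?_⟩
    · intro j
      induction j using Fin.lastCases with
      | last => simp
      | cast j => simpa [Fin.snoc_castSucc] using hpi j
    · rw [Fin.sum_univ_castSucc]
      simp [Fin.snoc_castSucc, Fin.snoc_last, hs1]
    · rw [Fin.sum_univ_castSucc]
      simp [Fin.snoc_castSucc, Fin.snoc_last, hs2]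
  · intro y hy
    simp only [mem_filter] at hy
    have h0 := key y hy.2.1
    have := Fin.snoc_init_self y
    rw [h0] at this
    exact this
  · intro y hy
    simp
  · intro y hy
    simp only [mem_filter] at hy
    have h0 := key y hy.2.1
    rw [Fin.prod_univ_castSucc, h0]
    simp [Fin.init]

lemma pS_stable (N k m : ℕ) (hk : k ≤ N) : pS N k m = pS k k m := by
  induction N with
  | zero => interval_cases k; rfl
  | succ N ih =>
    rcases Nat.lt_or_ge k (N+1) with h | h
    · rw [pS_pad N k m (by omega), ih (by omega)]
    · have : k = N + 1 := by omega
      subst this; rfl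
lemma sum_update_add {N : ℕ} (y : Fin N → ℕ) (g : Fin N → ℕ → ℕ) (i : Fin N) (b : ℕ) :
    (∑ j, g j (Function.update y i b j)) + g i (y i)
      = (∑ j, g j (y j)) + g i b := by
  classical
  rw [← Finset.add_sum_erase _ (fun j => g j (Function.update y i b j)) (Finset.mem_univ i),
      ← Finset.add_sum_erase _ (fun j => g j (y j)) (Finset.mem_univ i)]
  simp only [Function.update_self]
  have h : ∑ j ∈ Finset.univ.erase i, g j (Function.update y i b j)
      = ∑ j ∈ Finset.univ.erase i, g j (y j) :=
    Finset.sum_congr rfl (fun j hj => by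
      rw [Function.update_of_ne (Finset.ne_of_mem_erase hj)])
  rw [h]; ring

lemma pS_rec (n m : ℕ) :
    ((n:ℝ)+1) * pS (n+1) (n+1) (m+1)
      = ∑ i : Fin (n+1), pS (n+1) (n - (i:ℕ)) m := by
  classical
  set P : (Fin (n+1) → ℕ) → ℝ :=
    fun y => ∏ j : Fin (n+1), (1 / ((((j:ℕ)+1) ^ y j * (y j).factorial : ℕ) : ℝ)) with hP
  set s : Finset (Fin (n+1) → ℕ) :=
    (Fintype.piFinset fun _ : Fin (n+1) => range (n+1+1)).filter
      (fun y => (∑ j : Fin (n+1), ((j:ℕ)+1) * y j = n+1) ∧ (∑ j, y j = m+1)) with hs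
  have lhs_eq : ((n:ℝ)+1) * pS (n+1) (n+1) (m+1)
      = ∑ i : Fin (n+1), ∑ y ∈ s, (((((i:ℕ)+1) * y i : ℕ)) : ℝ) * P y := by
    rw [pS, ← hs, ← hP, Finset.mul_sum, Finset.sum_comm]
    refine Finset.sum_congr rfl (fun y hy => ?_)
    rw [hs, Finset.mem_filter] at hy
    have h1 : ((n:ℝ)+1) = ∑ i : Fin (n+1), (((((i:ℕ)+1) * y i : ℕ)) : ℝ) := by
      rw [← Nat.cast_sum, hy.2.1]
      push_cast
      ring
    rw [h1, Finset.sum_mul]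
  rw [lhs_eq]
  refine Finset.sum_congr rfl (fun i _ => ?_)
  have hfilter : ∑ y ∈ s, (((((i:ℕ)+1) * y i : ℕ)) : ℝ) * P y
      = ∑ y ∈ s.filter (fun y => y i ≠ 0), (((((i:ℕ)+1) * y i : ℕ)) : ℝ) * P y :=
    (Finset.sum_filter_of_ne (fun y _ hne => by
      intro hzero
      exact hne (by rw [hzero]; simp))).symm
  rw [hfilter, pS]
  have hterm : ∀ y ∈ s.filter (fun y => y i ≠ 0),
      (((((i:ℕ)+1) * y i : ℕ)) : ℝ) * P y
        = ∏ j : Fin (n+1), (1 / ((((j:ℕ)+1) ^ (Function.update y i (y i - 1) j) *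
            ((Function.update y i (y i - 1) j)).factorial : ℕ) : ℝ)) := by
    intro y hy
    simp only [Finset.mem_filter, hs] at hy
    have hyi : 1 ≤ y i := Nat.one_le_iff_ne_zero.mpr hy.2
    simp only [hP]
    rw [← Finset.mul_prod_erase Finset.univ
        (fun j : Fin (n+1) => (1:ℝ) / ((((j:ℕ)+1) ^ y j * (y j).factorial : ℕ) : ℝ))
        (Finset.mem_univ i),
      ← Finset.mul_prod_erase Finset.univ
        (fun j : Fin (n+1) => (1:ℝ) / ((((j:ℕ)+1) ^ (Function.update y i (y i - 1) j) *
            ((Function.update y i (y i - 1) j)).factorial : ℕ) : ℝ))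
        (Finset.mem_univ i), ← mul_assoc]
    have hoff : ∏ j ∈ Finset.univ.erase i,
        (1 / ((((j:ℕ)+1) ^ y j * (y j).factorial : ℕ) : ℝ))
        = ∏ j ∈ Finset.univ.erase i,
        (1 / ((((j:ℕ)+1) ^ (Function.update y i (y i - 1) j) *
          ((Function.update y i (y i - 1) j)).factorial : ℕ) : ℝ)) :=
      Finset.prod_congr rfl (fun j hj => by
        rw [Function.update_of_ne (Finset.ne_of_mem_erase hj)])
    rw [hoff]
    congr 1
    obtain ⟨t, ht⟩ : ∃ t, y i = t + 1 := ⟨y i - 1, by omega⟩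
    rw [Function.update_self]
    have h1 : y i - 1 = t := by omega
    rw [h1, ht, pow_succ, Nat.factorial_succ]
    push_cast
    have hcn : ((i:ℕ):ℝ) + 1 ≠ 0 := by positivity
    have hfn : ((t.factorial : ℝ)) ≠ 0 := by positivity
    have hpn : (((i:ℕ):ℝ)+1) ^ t ≠ 0 := by positivity
    field_simp
  refine Finset.sum_nbij' (i := fun y => Function.update y i (y i - 1))
    (j := fun y => Function.update y i (y i + 1)) ?_ ?_ ?_ ?_ hterm
  · -- forward membership
    intro y hy
    simp only [Finset.mem_filter, Fintype.mem_piFinset, Finset.mem_range, hs] at hy ⊢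
    obtain ⟨⟨hpi, hs1, hs2⟩, hne⟩ := hy
    have hyi : 1 ≤ y i := Nat.one_le_iff_ne_zero.mpr hne
    have hilt : (i:ℕ) ≤ n := by omega
    have key1 : (∑ j : Fin (n+1), ((j:ℕ)+1) * Function.update y i (y i - 1) j) = n - (i:ℕ) := by
      have h := sum_update_add (N := n+1) y (fun j t => ((j:ℕ)+1) * t) i (y i - 1)
      rw [hs1] at h
      obtain ⟨v, hv⟩ : ∃ v, y i = v + 1 := ⟨y i - 1, by omega⟩
      have e : (((i:ℕ)+1)) * (y i - 1) + ((i:ℕ)+1) = ((i:ℕ)+1) * y i := by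
        rw [hv, Nat.add_sub_cancel]; ring
      omega
    have key2 : (∑ j : Fin (n+1), Function.update y i (y i - 1) j) = m := by
      have h := sum_update_add (N := n+1) y (fun _ t => t) i (y i - 1)
      rw [hs2] at h
      omega
    refine ⟨?_, key1, key2⟩
    intro j
    have hle := Finset.single_le_sum
      (f := fun j : Fin (n+1) => ((j:ℕ)+1) * Function.update y i (y i - 1) j)
      (fun k _ => Nat.zero_le _) (Finset.mem_univ j)
    rw [key1] at hle
    have : Function.update y i (y i - 1) j ≤ ((j:ℕ)+1) * Function.update y i (y i - 1) j :=
      Nat.le_mul_of_pos_left _ (by omega)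
    omega
  · -- backward membership
    intro y hy
    simp only [Finset.mem_filter, Fintype.mem_piFinset, Finset.mem_range, hs] at hy ⊢
    obtain ⟨hpi, hs1, hs2⟩ := hy
    have hilt : (i:ℕ) ≤ n := by omega
    have key1 : (∑ j : Fin (n+1), ((j:ℕ)+1) * Function.update y i (y i + 1) j) = n + 1 := by
      have h := sum_update_add (N := n+1) y (fun j t => ((j:ℕ)+1) * t) i (y i + 1)
      rw [hs1] at h
      have e : ((i:ℕ)+1) * (y i + 1) = ((i:ℕ)+1) * y i + ((i:ℕ)+1) := by ring
      omega
    have key2 : (∑ j : Fin (n+1), Function.update y i (y i + 1) j) = m + 1 := by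
      have h := sum_update_add (N := n+1) y (fun _ t => t) i (y i + 1)
      rw [hs2] at h
      omega
    refine ⟨⟨?_, key1, key2⟩, ?_⟩
    · intro j
      have hj := hpi j
      have hji : Function.update y i (y i + 1) j ≤ y j + 1 := by
        rcases eq_or_ne j i with h | h
        · subst h; rw [Function.update_self]
        · rw [Function.update_of_ne h]; omega
      omega
    · rw [Function.update_self]; omega
  · -- left inverse
    intro y hy
    simp only [Finset.mem_filter, hs] at hy
    have hyi : 1 ≤ y i := Nat.one_le_iff_ne_zero.mpr hy.2
    funext j
    rcases eq_or_ne j i with h | h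
    · subst h
      simp only [Function.update_idem, Function.update_self]
      omega
    · simp only [Function.update_of_ne h]
  · -- right inverse
    intro y hy
    funext j
    rcases eq_or_ne j i with h | h
    · subst h
      simp only [Function.update_idem, Function.update_self]
      omega
    · simp only [Function.update_of_ne h]
lemma fact_pS (n : ℕ) : ∀ m : ℕ, ((n.factorial : ℝ) * m.factorial) * pS n n m = itA n m := by
  induction n using Nat.strong_induction_on with
  | _ n ih =>
    intro m
    match n, m with
    | 0, 0 => simp [pS_zero, show itA 0 0 = 1 from rfl]
    | 0, m+1 => simp [pS_zero_succ, show itA 0 (m+1) = 0 from rfl]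
    | n+1, 0 =>
      rw [pS_parts_zero, itA_zero_right]
      simp
    | n+1, m+1 =>
      rw [itA_conv m n]
      have h1 : (((n+1).factorial : ℝ) * ((m+1).factorial)) * pS (n+1) (n+1) (m+1)
          = (n.factorial : ℝ) * ((m+1).factorial) * (((n:ℝ)+1) * pS (n+1) (n+1) (m+1)) := by
        rw [Nat.factorial_succ]; push_cast; ring
      rw [h1, pS_rec]
      have h2 : ∑ i : Fin (n+1), pS (n+1) (n - (i:ℕ)) m = ∑ k ∈ range (n+1), pS k k m := by
        rw [Fin.sum_univ_eq_sum_range (fun i => pS (n+1) (n - i) m), ← Finset.sum_range_reflect]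
        refine Finset.sum_congr rfl (fun k hk => ?_)
        simp only [Finset.mem_range] at hk
        have e1 : n - (n + 1 - 1 - k) = k := by omega
        rw [e1, pS_stable (n+1) k m (by omega)]
      rw [h2, Finset.mul_sum, Finset.mul_sum]
      refine Finset.sum_congr rfl (fun k hk => ?_)
      simp only [Finset.mem_range] at hk
      rw [← ih k (by omega) m]
      have hk0 : (k.factorial : ℝ) ≠ 0 := by positivity
      rw [Nat.factorial_succ m]
      push_cast
      field_simp
lemma deriv_formula (a : ℝ) : ∀ (n : ℕ) (x : ℝ), 1 < x →
    iteratedDeriv n (fun x => Real.log a / Real.log x) x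
      = (-1)^n / x^n *
        ∑ m ∈ range (n+1), (itA n m : ℝ) * Real.log a / (Real.log x)^(m+1) := by
  intro n
  induction n with
  | zero =>
    intro x hx
    simp [iteratedDeriv_zero, Finset.sum_range_one, show itA 0 0 = 1 from rfl]
  | succ n ihn =>
    intro x hx
    have hx0 : (0:ℝ) < x := by linarith
    have hlx : 0 < Real.log x := Real.log_pos hx
    rw [iteratedDeriv_succ]
    have hev : iteratedDeriv n (fun x => Real.log a / Real.log x)
        =ᶠ[nhds x] (fun t => (-1:ℝ)^n / t^n *
          ∑ m ∈ range (n+1), (itA n m : ℝ) * Real.log a / (Real.log t)^(m+1)) := by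
      filter_upwards [isOpen_Ioi.mem_nhds (show x ∈ Set.Ioi (1:ℝ) from hx)] with t ht
      exact ihn t ht
    rw [hev.deriv_eq]
    have gfun : (fun t : ℝ => (-1:ℝ)^n / t^n *
          ∑ m ∈ range (n+1), (itA n m : ℝ) * Real.log a / (Real.log t)^(m+1))
        = fun t => ∑ m ∈ range (n+1), ((-1:ℝ)^n * itA n m * Real.log a) *
            (t^n * Real.log t ^ (m+1))⁻¹ := by
      funext t
      rw [Finset.mul_sum]
      refine Finset.sum_congr rfl (fun m _ => ?_)
      rw [div_eq_mul_inv, div_eq_mul_inv, mul_inv]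
      ring
    have hlogx : HasDerivAt Real.log x⁻¹ x := Real.hasDerivAt_log (ne_of_gt hx0)
    have hterm : ∀ m : ℕ, HasDerivAt (fun t : ℝ => (t^n * Real.log t ^ (m+1))⁻¹)
        (-((n * x^(n-1)) * Real.log x ^ (m+1) + x^n * ((m+1) * Real.log x ^ m * x⁻¹))
          / (x^n * Real.log x ^ (m+1))^2) x := by
      intro m
      have h1 : HasDerivAt (fun t : ℝ => t^n) ((n:ℝ) * x^(n-1)) x := hasDerivAt_pow n x
      have h2 : HasDerivAt (fun t : ℝ => Real.log t ^ (m+1))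
          (((m:ℝ)+1) * Real.log x ^ m * x⁻¹) x := by
        have := hlogx.fun_pow (m+1)
        simpa using this
      have hne : x^n * Real.log x ^ (m+1) ≠ 0 := by positivity
      have h4 := (h1.fun_mul h2).fun_inv hne
      convert h4 using 1
    have hg : HasDerivAt (fun t => ∑ m ∈ range (n+1), ((-1:ℝ)^n * itA n m * Real.log a) *
          (t^n * Real.log t ^ (m+1))⁻¹)
        (∑ m ∈ range (n+1), ((-1:ℝ)^n * itA n m * Real.log a) *
          (-((n * x^(n-1)) * Real.log x ^ (m+1) + x^n * ((m+1) * Real.log x ^ m * x⁻¹))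
            / (x^n * Real.log x ^ (m+1))^2)) x :=
      HasDerivAt.fun_sum (fun m _ => ((hterm m).const_mul _))
    rw [gfun, hg.deriv]
    -- now manipulate RHS
    have hsplit : ∀ m : ℕ, (itA (n+1) m : ℝ) = (n:ℝ) * itA n m + (m:ℝ) * itA n (m-1) := by
      intro m; rw [itA_succ]; push_cast; ring
    have hRHS : ∑ m ∈ range (n+1+1), (itA (n+1) m : ℝ) * Real.log a / (Real.log x)^(m+1)
        = ∑ m ∈ range (n+1), ((n:ℝ) * itA n m * Real.log a / (Real.log x)^(m+1)
            + ((m:ℝ)+1) * itA n m * Real.log a / (Real.log x)^(m+2)) := by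
      calc ∑ m ∈ range (n+1+1), (itA (n+1) m : ℝ) * Real.log a / (Real.log x)^(m+1)
          = ∑ m ∈ range (n+1+1), ((n:ℝ) * itA n m * Real.log a / (Real.log x)^(m+1)
              + (m:ℝ) * itA n (m-1) * Real.log a / (Real.log x)^(m+1)) := by
            refine Finset.sum_congr rfl (fun m _ => ?_)
            rw [hsplit m]
            ring
        _ = (∑ m ∈ range (n+1+1), (n:ℝ) * itA n m * Real.log a / (Real.log x)^(m+1))
            + ∑ m ∈ range (n+1+1), (m:ℝ) * itA n (m-1) * Real.log a / (Real.log x)^(m+1) :=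
            Finset.sum_add_distrib
        _ = (∑ m ∈ range (n+1), (n:ℝ) * itA n m * Real.log a / (Real.log x)^(m+1))
            + ∑ m ∈ range (n+1), ((m:ℝ)+1) * itA n m * Real.log a / (Real.log x)^(m+2) := by
            congr 1
            · rw [Finset.sum_range_succ, itA_eq_zero_of_lt n (n+1) (by omega)]
              simp
            · rw [Finset.sum_range_succ']
              simp only [Nat.cast_zero, zero_mul, mul_zero, zero_div, add_zero, zero_add,
                Nat.add_sub_cancel]
              refine Finset.sum_congr rfl (fun m _ => ?_)
              push_cast
              ring_nf
        _ = ∑ m ∈ range (n+1), ((n:ℝ) * itA n m * Real.log a / (Real.log x)^(m+1)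
            + ((m:ℝ)+1) * itA n m * Real.log a / (Real.log x)^(m+2)) :=
            Finset.sum_add_distrib.symm
    rw [hRHS, Finset.mul_sum]
    refine Finset.sum_congr rfl (fun m _ => ?_)
    have hxne : x ≠ 0 := ne_of_gt hx0
    have hlne : Real.log x ≠ 0 := ne_of_gt hlx
    cases n with
    | zero =>
      simp only [Nat.cast_zero, zero_mul, pow_zero, one_mul, zero_add]
      field_simp
      ring
    | succ k =>
      have hpow : x^(k+1-1) = x^k := by rw [Nat.add_sub_cancel]
      rw [hpow]
      field_simp
      ring

theorem iteratedDeriv_log_base (n : ℕ) (a : ℝ) (ha : 0 < a) (x₀ : ℝ) (hx : 1 < x₀) :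
    iteratedDeriv n (fun x => Real.log a / Real.log x) x₀ =
      (Real.log a / Real.log x₀) * ((-1) ^ n * (n.factorial : ℝ) / x₀ ^ n) *
        ∑ y ∈ (Fintype.piFinset fun _ : Fin n => Finset.range (n + 1)).filter
            (fun y => ∑ i : Fin n, ((i : ℕ) + 1) * y i = n),
          (((∑ i, y i).factorial : ℝ) / (Real.log x₀) ^ (∑ i, y i)) *
            ∏ i : Fin n,
              (1 / ((((i : ℕ) + 1) ^ y i * (y i).factorial : ℕ) : ℝ)) := by
  have hlx : 0 < Real.log x₀ := Real.log_pos hx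
  have hx0 : (0:ℝ) < x₀ := by linarith
  rw [deriv_formula a n x₀ hx]
  have hmaps : ∀ y ∈ (Fintype.piFinset fun _ : Fin n => Finset.range (n + 1)).filter
      (fun y => ∑ i : Fin n, ((i : ℕ) + 1) * y i = n),
      (∑ i, y i) ∈ range (n+1) := by
    intro y hy
    simp only [Finset.mem_filter] at hy
    rw [Finset.mem_range]
    have h1 : ∑ i : Fin n, y i ≤ ∑ i : Fin n, ((i:ℕ)+1) * y i :=
      Finset.sum_le_sum (fun i _ => Nat.le_mul_of_pos_left _ (by omega))
    omega
  rw [← Finset.sum_fiberwise_of_maps_to hmaps]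
  have inner : ∀ m ∈ range (n+1),
      (∑ y ∈ ((Fintype.piFinset fun _ : Fin n => Finset.range (n + 1)).filter
            (fun y => ∑ i : Fin n, ((i : ℕ) + 1) * y i = n)).filter
            (fun y => (∑ i, y i) = m),
          (((∑ i, y i).factorial : ℝ) / (Real.log x₀) ^ (∑ i, y i)) *
            ∏ i : Fin n, (1 / ((((i : ℕ) + 1) ^ y i * (y i).factorial : ℕ) : ℝ)))
        = ((m.factorial : ℝ) / (Real.log x₀)^m) * pS n n m := by
    intro m _
    rw [pS, Finset.filter_filter, Finset.mul_sum]
    refine Finset.sum_congr rfl (fun y hy => ?_)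
    simp only [Finset.mem_filter] at hy
    rw [hy.2.2]
  rw [Finset.sum_congr rfl inner, Finset.mul_sum, Finset.mul_sum]
  refine Finset.sum_congr rfl (fun m _ => ?_)
  rw [← fact_pS n m]
  have h1 : (Real.log x₀) ≠ 0 := ne_of_gt hlx
  have h2 : x₀ ≠ 0 := ne_of_gt hx0
  have h3 : (n.factorial : ℝ) ≠ 0 := by positivity
  have h4 : (m.factorial : ℝ) ≠ 0 := by positivity
  field_simp
  ring
end
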